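/- arXiv:math/0212250 — 6 statements merged into one kernel-verified Lean document; each statement's English description precedes it below -/
import Mathlib

section
/- There is no uncountable Polish group which is free as an abstract group: if G is a topological group whose underlying space is Polish and G admits a free generating set, then G is countable. -/
open Filter Topology Function

namespace NoFreePolish

variable {G : Type*} [Group G]

/-- Nested power towers: `dW g q j k = g k * (dW g q (j-1) (k+1)) ^ q k`. -/
def dW (g : ℕ → G) (q : ℕ → ℕ) : ℕ → ℕ → G
  | 0, k => g k
  | j + 1, k => g k * (dW g q j (k + 1)) ^ q k

lemma dW_congr {g g' : ℕ → G} {q q' : ℕ → ℕ} :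
    ∀ (j k : ℕ), (∀ i, k ≤ i → i ≤ k + j → g i = g' i) →
      (∀ i, k ≤ i → i < k + j → q i = q' i) → dW g q j k = dW g' q' j k
  | 0, k, hg, _ => hg k le_rfl (by omega)
  | j + 1, k, hg, hq => by
    show g k * (dW g q j (k + 1)) ^ q k = g' k * (dW g' q' j (k + 1)) ^ q' k
    rw [hg k le_rfl (by omega), hq k le_rfl (by omega),
      dW_congr j (k + 1) (fun i h1 h2 => hg i (by omega) (by omega))
        (fun i h1 h2 => hq i (by omega) (by omega))]

section Topo

variable [TopologicalSpace G] [IsTopologicalGroup G]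

lemma dW_continuous (g : ℕ → G) (q : ℕ → ℕ) :
    ∀ (j k m : ℕ), m = k + j → Continuous fun z : G => dW (Function.update g m z) q j k
  | 0, k, m, hm => by
    subst hm
    simpa [dW] using continuous_id'
  | j + 1, k, m, hm => by
    have ih := dW_continuous g q j (k + 1) m (by omega)
    show Continuous fun z : G =>
      Function.update g m z k * (dW (Function.update g m z) q j (k + 1)) ^ q k
    simp only [Function.update_of_ne (show k ≠ m by omega)]
    exact continuous_const.mul (ih.pow _)

end Topo

lemma dW_last_one {g : ℕ → G} {q : ℕ → ℕ} :
    ∀ (j k m : ℕ), m = k + j + 1 → g m = 1 → dW g q (j + 1) k = dW g q j k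
  | 0, k, m, hm, hg => by
    subst hm
    show g k * (g (k + 0 + 1)) ^ q k = g k
    rw [hg, one_pow, mul_one]
  | j + 1, k, m, hm, hg => by
    show g k * (dW g q (j + 1) (k + 1)) ^ q k = g k * (dW g q j (k + 1)) ^ q k
    rw [dW_last_one j (k + 1) m (by omega) hg]

/-- The arithmetic bookkeeping: `dPS a k = (P k, S k)` where
`P (k+1) = P k * q k`, `S k = ∑_{i ≤ k} P i * a i`, and
`q k = |S k| + |a k| + k + 2`. -/
def dPS (a : ℕ → ℤ) : ℕ → ℕ × ℤ
  | 0 => (1, a 0)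
  | k + 1 =>
    let p := dPS a k
    let q := p.2.natAbs + (a k).natAbs + k + 2
    (p.1 * q, p.2 + (p.1 * q : ℕ) * a (k + 1))

def dP (a : ℕ → ℤ) (k : ℕ) : ℕ := (dPS a k).1

def dS (a : ℕ → ℤ) (k : ℕ) : ℤ := (dPS a k).2

def dq (a : ℕ → ℤ) (k : ℕ) : ℕ := (dS a k).natAbs + (a k).natAbs + k + 2

lemma dP_zero (a : ℕ → ℤ) : dP a 0 = 1 := rfl

lemma dS_zero (a : ℕ → ℤ) : dS a 0 = a 0 := rfl

lemma dP_succ (a : ℕ → ℤ) (k : ℕ) : dP a (k + 1) = dP a k * dq a k := rfl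

lemma dS_succ (a : ℕ → ℤ) (k : ℕ) :
    dS a (k + 1) = dS a k + (dP a (k + 1) : ℤ) * a (k + 1) := rfl

lemma dP_pos (a : ℕ → ℤ) (k : ℕ) : 1 ≤ dP a k := by
  induction k with
  | zero => simp [dP_zero]
  | succ k ih =>
    rw [dP_succ]
    have : 1 ≤ dq a k := by unfold dq; omega
    exact Nat.one_le_iff_ne_zero.mpr (by positivity)

lemma dPS_congr {a a' : ℕ → ℤ} : ∀ (k : ℕ), (∀ i, i ≤ k → a i = a' i) → dPS a k = dPS a' k
  | 0, h => by simp [dPS, h 0 le_rfl]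
  | k + 1, h => by
    simp only [dPS]
    rw [dPS_congr k (fun i hi => h i (by omega)), h k (by omega), h (k + 1) le_rfl]

lemma dq_congr {a a' : ℕ → ℤ} (k : ℕ) (h : ∀ i, i ≤ k → a i = a' i) : dq a k = dq a' k := by
  unfold dq dS
  rw [dPS_congr k h, h k le_rfl]

section Core

variable [MetricSpace G] [IsTopologicalGroup G]
variable (f : G → ℤ)

/-- The invariant carried along the recursive construction. -/
def DPred (m : ℕ) (gs : ℕ → G) : Prop :=
  (∀ k ≤ m, f (gs k) ≠ 0) ∧
  ∀ j < m, ∀ k ≤ j,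
    dist (dW gs (dq (f ∘ gs)) (j + 1 - k) k) (dW gs (dq (f ∘ gs)) (j - k) k) ≤ (1 / 2 : ℝ) ^ j

lemma dPred_step (h : ∀ U ∈ 𝓝 (1 : G), ∃ z ∈ U, f z ≠ 0) (m : ℕ) (gs : ℕ → G)
    (hgs : DPred f m gs) : ∃ z, DPred f (m + 1) (Function.update gs (m + 1) z) := by
  classical
  set q : ℕ → ℕ := dq (f ∘ gs) with hq
  -- the continuous maps
  set F : ℕ → G → G := fun k z => dW (Function.update gs (m + 1) z) q (m + 1 - k) k with hF
  have hFcont : ∀ k ≤ m, Continuous (F k) := fun k hk =>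
    dW_continuous gs q (m + 1 - k) k (m + 1) (by omega)
  -- value at 1
  have hFone : ∀ k ≤ m, F k 1 = dW gs q (m - k) k := by
    intro k hk
    have h1 : m + 1 - k = (m - k) + 1 := by omega
    rw [hF]
    simp only [h1]
    rw [dW_last_one (g := Function.update gs (m + 1) 1) (q := q) (m - k) k (m + 1) (by omega)
      (Function.update_self _ _ _)]
    exact dW_congr (m - k) k
      (fun i h1 h2 => Function.update_of_ne (by omega) _ _) (fun _ _ _ => rfl)
  -- the neighborhood
  set V : Set G := ⋂ k ∈ Finset.range (m + 1), (F k) ⁻¹' Metric.ball (dW gs q (m - k) k)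
    ((1 / 2 : ℝ) ^ m) with hV
  have hVmem : V ∈ 𝓝 (1 : G) := by
    rw [hV, Filter.biInter_finset_mem]
    intro k hk
    have hk' : k ≤ m := by simpa using Nat.lt_succ_iff.mp (Finset.mem_range.mp hk)
    apply (hFcont k hk').continuousAt.preimage_mem_nhds
    rw [hFone k hk']
    exact Metric.ball_mem_nhds _ (by positivity)
  obtain ⟨z, hzV, hzf⟩ := h V hVmem
  refine ⟨z, ?_, ?_⟩
  · intro k hk
    rcases eq_or_lt_of_le hk with rfl | hk'
    · rwa [Function.update_self]
    · rw [Function.update_of_ne (by omega)]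
      exact hgs.1 k (by omega)
  · intro j hj k hk
    set gs' : ℕ → G := Function.update gs (m + 1) z with hgs'
    have hagree : ∀ i, i ≤ m → gs' i = gs i := fun i hi =>
      Function.update_of_ne (by omega) _ _
    have hqagree : ∀ i, i ≤ m → dq (f ∘ gs') i = q i := fun i hi =>
      dq_congr i (fun l hl => by simp [hagree l (by omega)])
    rcases Nat.lt_succ_iff_lt_or_eq.mp hj with hj' | rfl
    · -- j < m : old estimate transfers
      have e1 : dW gs' (dq (f ∘ gs')) (j + 1 - k) k = dW gs (dq (f ∘ gs)) (j + 1 - k) k :=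
        dW_congr _ _ (fun i h1 h2 => hagree i (by omega))
          (fun i h1 h2 => hqagree i (by omega))
      have e2 : dW gs' (dq (f ∘ gs')) (j - k) k = dW gs (dq (f ∘ gs)) (j - k) k :=
        dW_congr _ _ (fun i h1 h2 => hagree i (by omega))
          (fun i h1 h2 => hqagree i (by omega))
      rw [e1, e2]
      exact hgs.2 j hj' k hk
    · -- j = m : new estimate from the choice of z
      have e1 : dW gs' (dq (f ∘ gs')) (j + 1 - k) k = F k z :=
        dW_congr _ _ (fun i _ _ => rfl) (fun i h1 h2 => hqagree i (by omega))
      have e2 : dW gs' (dq (f ∘ gs')) (j - k) k = dW gs q (j - k) k :=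
        dW_congr _ _ (fun i h1 h2 => hagree i (by omega))
          (fun i h1 h2 => hqagree i (by omega))
      rw [e1, e2]
      have := Set.mem_iInter₂.mp hzV k (Finset.mem_range.mpr (by omega))
      exact le_of_lt (by simpa [Metric.mem_ball, dist_comm] using this)

/-- The recursively constructed sequence of partial data. -/
noncomputable def dseq (h : ∀ U ∈ 𝓝 (1 : G), ∃ z ∈ U, f z ≠ 0) :
    (m : ℕ) → {gs : ℕ → G // DPred f m gs}
  | 0 => ⟨fun _ => (h Set.univ Filter.univ_mem).choose, by
      refine ⟨fun k _ => (h Set.univ Filter.univ_mem).choose_spec.2, ?_⟩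
      intro j hj
      omega⟩
  | m + 1 =>
    ⟨Function.update (dseq h m).1 (m + 1)
        (dPred_step f h m (dseq h m).1 (dseq h m).2).choose,
      (dPred_step f h m (dseq h m).1 (dseq h m).2).choose_spec⟩

lemma dseq_succ_agree (h : ∀ U ∈ 𝓝 (1 : G), ∃ z ∈ U, f z ≠ 0) (m i : ℕ) (hi : i ≤ m) :
    (dseq f h (m + 1)).1 i = (dseq f h m).1 i := by
  show Function.update (dseq f h m).1 (m + 1) _ i = _
  exact Function.update_of_ne (by omega) _ _

lemma dseq_agree (h : ∀ U ∈ 𝓝 (1 : G), ∃ z ∈ U, f z ≠ 0) (i : ℕ) :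
    ∀ (M : ℕ), i ≤ M → (dseq f h M).1 i = (dseq f h i).1 i := by
  intro M
  induction M with
  | zero =>
    intro hi
    obtain rfl : i = 0 := Nat.le_zero.mp hi
    rfl
  | succ M ih =>
    intro hi
    rcases Nat.lt_succ_iff_lt_or_eq.mp (Nat.lt_succ_of_le hi) with h' | rfl
    · rw [dseq_succ_agree f h M i (by omega)]
      exact ih (by omega)
    · rfl

theorem dudley_core [CompleteSpace G]
    (hf : ∀ x y : G, f (x * y) = f x + f y)
    (h : ∀ U ∈ 𝓝 (1 : G), ∃ z ∈ U, f z ≠ 0) : False := by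
  classical
  have f1 : f 1 = 0 := by have := hf 1 1; simp at this; omega
  have fpow : ∀ (x : G) (n : ℕ), f (x ^ n) = n * f x := by
    intro x n
    induction n with
    | zero => simpa using f1
    | succ n ih => rw [pow_succ, hf, ih]; push_cast; ring
  -- the sequence
  set g : ℕ → G := fun m => (dseq f h m).1 m with hg
  set a : ℕ → ℤ := f ∘ g with ha
  set Q : ℕ → ℕ := dq a with hQ
  have hg1 : ∀ k, a k ≠ 0 := fun k => (dseq f h k).2.1 k le_rfl
  have hg2 : ∀ j, ∀ k, k ≤ j →
      dist (dW g Q (j + 1 - k) k) (dW g Q (j - k) k) ≤ (1 / 2 : ℝ) ^ j := by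
    intro j k hk
    have H := (dseq f h (j + 1)).2.2 j (by omega) k hk
    set gs : ℕ → G := (dseq f h (j + 1)).1 with hgs
    have hagr : ∀ i, i ≤ j + 1 → gs i = g i := fun i hi => dseq_agree f h i (j + 1) hi
    have hqagr : ∀ i, i ≤ j + 1 → dq (f ∘ gs) i = Q i := fun i hi =>
      dq_congr i (fun l hl => by simp [ha, hagr l (by omega)])
    have e1 : dW gs (dq (f ∘ gs)) (j + 1 - k) k = dW g Q (j + 1 - k) k :=
      dW_congr _ _ (fun i h1 h2 => hagr i (by omega)) (fun i h1 h2 => hqagr i (by omega))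
    have e2 : dW gs (dq (f ∘ gs)) (j - k) k = dW g Q (j - k) k :=
      dW_congr _ _ (fun i h1 h2 => hagr i (by omega)) (fun i h1 h2 => hqagr i (by omega))
    rw [← e1, ← e2]
    exact H
  -- limits
  have hy : ∀ k : ℕ, ∃ y : G, Tendsto (fun j => dW g Q j k) atTop (𝓝 y) := by
    intro k
    apply cauchySeq_tendsto_of_complete
    apply cauchySeq_of_le_geometric (1 / 2 : ℝ) ((1 / 2 : ℝ) ^ k) (by norm_num)
    intro j
    have := hg2 (k + j) k (by omega)
    have e1 : k + j + 1 - k = j + 1 := by omega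
    have e2 : k + j - k = j := by omega
    rw [e1, e2] at this
    rw [dist_comm] at this
    calc dist (dW g Q j k) (dW g Q (j + 1) k) ≤ (1 / 2 : ℝ) ^ (k + j) := this
    _ = (1 / 2 : ℝ) ^ k * (1 / 2 : ℝ) ^ j := pow_add _ _ _
  choose Y hY using hy
  have hrec : ∀ k, Y k = g k * (Y (k + 1)) ^ Q k := by
    intro k
    have t1 : Tendsto (fun j => dW g Q (j + 1) k) atTop (𝓝 (Y k)) :=
      (hY k).comp (tendsto_add_atTop_nat 1)
    have t2 : Tendsto (fun j => g k * (dW g Q j (k + 1)) ^ Q k) atTop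
        (𝓝 (g k * (Y (k + 1)) ^ Q k)) :=
      tendsto_const_nhds.mul ((hY (k + 1)).pow _)
    exact tendsto_nhds_unique t1 t2
  -- arithmetic endgame
  set b : ℕ → ℤ := fun k => f (Y k) with hb
  have hbrec : ∀ k, b k = a k + (Q k : ℤ) * b (k + 1) := by
    intro k
    rw [hb]
    simp only
    rw [hrec k, hf, fpow]
    rfl
  have key1 : ∀ k, b 0 = dS a k + (dP a (k + 1) : ℤ) * b (k + 1) := by
    intro k
    induction k with
    | zero =>
      rw [hbrec 0, dS_zero, dP_succ, dP_zero]
      push_cast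
      ring
    | succ k ih =>
      rw [ih, hbrec (k + 1), dS_succ a k, dP_succ a (k + 1)]
      have : Q (k + 1) = dq a (k + 1) := rfl
      rw [this]
      push_cast
      ring
  have key2 : ∀ k, b (k + 1) ≠ 0 := by
    intro k hbk
    have h1 := hbrec (k + 1)
    rw [hbk] at h1
    -- 0 = a (k+1) + Q (k+1) * b (k+2)
    have h2 : a (k + 1) = -((Q (k + 1) : ℤ) * b (k + 2)) := by linarith
    rcases eq_or_ne (b (k + 2)) 0 with h3 | h3
    · rw [h3] at h2; simp at h2; exact hg1 (k + 1) h2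
    · have h4 : (a (k + 1)).natAbs = Q (k + 1) * (b (k + 2)).natAbs := by
        rw [h2, Int.natAbs_neg, Int.natAbs_mul, Int.natAbs_natCast]
      have h5 : 1 ≤ (b (k + 2)).natAbs := Int.natAbs_pos.mpr h3
      have h6 : Q (k + 1) = (dS a (k + 1)).natAbs + (a (k + 1)).natAbs + (k + 1) + 2 := rfl
      have h7 : Q (k + 1) ≤ Q (k + 1) * (b (k + 2)).natAbs := Nat.le_mul_of_pos_right _ h5
      omega
  have final : ∀ k : ℕ, k + 2 ≤ (b 0).natAbs := by
    intro k
    have h1 := key1 k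
    have h2 : (b 0 - dS a k) = (dP a (k + 1) : ℤ) * b (k + 1) := by linarith
    have h3 : (dP a (k + 1)) * (b (k + 1)).natAbs = (b 0 - dS a k).natAbs := by
      rw [h2, Int.natAbs_mul, Int.natAbs_natCast]
    have h4 : (b 0 - dS a k).natAbs ≤ (b 0).natAbs + (dS a k).natAbs := Int.natAbs_sub_le _ _
    have h5 : 1 ≤ (b (k + 1)).natAbs := Int.natAbs_pos.mpr (key2 k)
    have h6 : dq a k ≤ dP a (k + 1) := by
      rw [dP_succ]
      calc dq a k = 1 * dq a k := (one_mul _).symm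
      _ ≤ dP a k * dq a k := Nat.mul_le_mul_right _ (dP_pos a k)
    have h7 : (dS a k).natAbs + k + 2 ≤ dq a k := by
      have : dq a k = (dS a k).natAbs + (a k).natAbs + k + 2 := rfl
      omega
    have h8 : dP a (k + 1) ≤ dP a (k + 1) * (b (k + 1)).natAbs :=
      Nat.le_mul_of_pos_right _ h5
    omega
  have := final (b 0).natAbs
  omega

end Core

end NoFreePolish

open NoFreePolish in
/-- There is no uncountable Polish group which is free as an abstract group:
a topological group whose underlying space is Polish and which admits a free
generating set is countable. -/
theorem no_uncountable_free_polish_group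
    (G : Type*) [Group G] [TopologicalSpace G] [IsTopologicalGroup G] [PolishSpace G]
    (hfree : IsFreeGroup G) : Countable G := by
  classical
  haveI := hfree
  by_contra hG
  set S := IsFreeGroup.Generators G with hS
  set e : FreeGroup S ≃* G := IsFreeGroup.mulEquiv G with he
  have hSc : ¬ Countable S := by
    intro hS'
    have hsurj : Function.Surjective (FreeGroup.mk : List (S × Bool) → FreeGroup S) :=
      fun x => ⟨x.toWord, FreeGroup.mk_toWord⟩
    haveI : Countable (FreeGroup S) := hsurj.countable
    exact hG (Countable.of_equiv _ e.toEquiv)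
  obtain ⟨D, hDc, hDd⟩ := TopologicalSpace.exists_countable_dense G
  set used : Set S := ⋃ d ∈ D, {s | ∃ bo, (s, bo) ∈ (e.symm d).toWord} with hused
  have husedc : used.Countable := by
    refine Set.Countable.biUnion hDc (fun d _ => ?_)
    have hsub : {s | ∃ bo, (s, bo) ∈ (e.symm d).toWord} ⊆
        Prod.fst '' {p | p ∈ (e.symm d).toWord} := by
      rintro s ⟨bo, hbo⟩
      exact ⟨(s, bo), hbo, rfl⟩
    exact (((e.symm d).toWord.finite_toSet.image Prod.fst).countable).mono hsub
  have hx : ∃ x₀ : S, x₀ ∉ used := by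
    by_contra hcon
    push_neg at hcon
    have : (Set.univ : Set S).Countable := by
      have : used = Set.univ := Set.eq_univ_of_forall hcon
      rwa [this] at husedc
    exact hSc (Set.countable_univ_iff.mp this)
  obtain ⟨x₀, hx₀⟩ := hx
  set F : S → Multiplicative ℤ := fun s => if s = x₀ then Multiplicative.ofAdd 1 else 1 with hFdef
  set f : G → ℤ := fun z => Multiplicative.toAdd (FreeGroup.lift F (e.symm z)) with hfdef
  have hf : ∀ x y : G, f (x * y) = f x + f y := by
    intro x y
    simp [hfdef, map_mul]
  have hfd : ∀ d ∈ D, f d = 0 := by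
    intro d hd
    have hone : FreeGroup.lift F (e.symm d) = 1 := by
      conv_lhs => rw [← FreeGroup.mk_toWord (x := e.symm d)]
      rw [FreeGroup.lift_mk]
      apply List.prod_eq_one
      intro w hw
      obtain ⟨p, hp, rfl⟩ := List.mem_map.mp hw
      have hpne : p.1 ≠ x₀ := by
        intro hh
        apply hx₀
        rw [hused]
        refine Set.mem_biUnion hd ⟨p.2, ?_⟩
        rw [← hh]; exact hp
      have : F p.1 = 1 := by simp [hFdef, hpne]
      rw [this]
      cases p.2 <;> simp
    simp [hfdef, hone]
  set x : G := e (FreeGroup.of x₀) with hxdef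
  have hfx : f x = 1 := by
    simp [hfdef, hxdef, FreeGroup.lift_apply_of, hFdef]
  have f1 : f 1 = 0 := by have := hf 1 1; simp at this; omega
  have hfinv : ∀ z : G, f z⁻¹ = - f z := by
    intro z
    have := hf z z⁻¹
    simp [f1] at this
    omega
  have hnear : ∀ U ∈ 𝓝 (1 : G), ∃ z ∈ U, f z ≠ 0 := by
    intro U hU
    obtain ⟨U', hU'sub, hU'open, hU'mem⟩ := mem_nhds_iff.mp hU
    set V : Set G := (fun w : G => x⁻¹ * w) ⁻¹' U' with hVdef
    have hVopen : IsOpen V := hU'open.preimage (continuous_const.mul continuous_id)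
    have hxV : x ∈ V := by
      simp only [hVdef, Set.mem_preimage, inv_mul_cancel]
      exact hU'mem
    obtain ⟨d, hdD, hdV⟩ := hDd.exists_mem_open hVopen ⟨x, hxV⟩
    refine ⟨x⁻¹ * d, hU'sub hdV, ?_⟩
    rw [hf, hfinv, hfx, hfd d hdD]
    norm_num
  letI m := TopologicalSpace.upgradeIsCompletelyMetrizable G
  exact @dudley_core G ‹Group G› m.toMetricSpace ‹IsTopologicalGroup G› f m.toCompleteSpace hf hnear
end

section
/- Let G be a group equipped with a metric d such that (G,d) is a complete metric space and the maps (x,y) ↦ x·y and x ↦ x⁻¹ are continuous for the topology induced by d. If the density of (G,d) is strictly less than the cardinality of G, then G is not a free group. -/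
open Filter Topology



private lemma abs_aux (x : ℤ) : |x| - 1 ≤ |1 + x| := by
  have h := abs_add_le (1 + x) (-1)
  simp at h
  have : |x + 1| = |1 + x| := by ring_nf
  omega

/-- Arithmetic core: no integer sequence can satisfy `a k = 1 + (k+1) * a (k+1)`. -/
lemma no_int_seq (a : ℕ → ℤ) (ha : ∀ k, a k = 1 + (k + 1) * a (k + 1)) : False := by
  have key : ∀ k : ℕ, ∀ c : ℤ, 0 ≤ c → c ≤ |a (k + 1)| → ((k : ℤ) + 1) * c - 1 ≤ |a k| := by
    intro k c hc hcle
    have h1 : ((k : ℤ) + 1) * c ≤ ((k : ℤ) + 1) * |a (k + 1)| :=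
      mul_le_mul_of_nonneg_left hcle (by positivity)
    have h2 : ((k : ℤ) + 1) * |a (k + 1)| = |((k : ℤ) + 1) * a (k + 1)| := by
      rw [abs_mul, abs_of_nonneg (by positivity : (0:ℤ) ≤ (k:ℤ) + 1)]
    have h3 := abs_aux (((k : ℤ) + 1) * a (k + 1))
    rw [← ha k] at h3
    omega
  have h1 : ∀ k : ℕ, 1 ≤ k → a k ≠ 0 := by
    intro k hk h0
    have := ha k
    rw [h0] at this
    have h3 : ((k : ℤ) + 1) ∣ 1 := ⟨-a (k + 1), by linarith⟩
    have h4 := Int.le_of_dvd one_pos h3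
    omega
  have h2 : ∀ k : ℕ, 1 ≤ k → (1 : ℤ) ≤ |a k| := by
    intro k hk
    have := h1 k hk
    rcases abs_cases (a k) with ⟨h, _⟩ | ⟨h, _⟩ <;> omega
  have h3 : ∀ k : ℕ, 1 ≤ k → (k : ℤ) ≤ |a k| := by
    intro k hk
    have := key k 1 one_pos.le (h2 (k + 1) (by omega))
    omega
  have key2 : ∀ n : ℕ, ∀ k : ℕ, 1 ≤ k → (n : ℤ) ≤ |a k| := by
    intro n
    induction n with
    | zero => intro k hk; positivity
    | succ n ih =>
      intro k hk
      set c : ℤ := max (n : ℤ) ((k : ℤ) + 1) with hcdef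
      have hc1 : (n : ℤ) ≤ c := le_max_left _ _
      have hc2 : (k : ℤ) + 1 ≤ c := le_max_right _ _
      have hcle : c ≤ |a (k + 1)| := max_le (ih (k + 1) (by omega)) (by exact_mod_cast h3 (k + 1) (by omega))
      have hK := key k c (by omega) hcle
      have h2c : 2 * c ≤ ((k : ℤ) + 1) * c :=
        mul_le_mul_of_nonneg_right (by omega : (2:ℤ) ≤ (k:ℤ) + 1) (by omega)
      push_cast
      omega
  have := key2 ((|a 1|).toNat + 1) 1 le_rfl
  omega



section Nest

variable {G : Type*} [Group G] [MetricSpace G] [CompleteSpace G] [IsTopologicalGroup G]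

set_option linter.unusedSectionVars false

/-- Nested product `x k * (x (k+1) * (... * (x N)^(N+1) ...)^(k+2))^(k+1)`. -/
def nestP (x : ℕ → G) (k N : ℕ) : G :=
  (List.range' k (N + 1 - k)).foldr (fun m acc => x m * acc ^ (m + 1)) 1

lemma foldr_congr_nest {x x' : ℕ → G} (l : List ℕ) (h : ∀ m ∈ l, x m = x' m) (init : G) :
    l.foldr (fun m acc => x m * acc ^ (m + 1)) init
      = l.foldr (fun m acc => x' m * acc ^ (m + 1)) init := by
  induction l with
  | nil => rfl
  | cons m l ih =>
    simp only [List.foldr_cons]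
    rw [h m (List.mem_cons_self), ih (fun m hm => h m (List.mem_cons_of_mem _ hm))]

lemma nestP_congr {x x' : ℕ → G} {k N : ℕ} (h : ∀ m, k ≤ m → m ≤ N → x m = x' m) :
    nestP x k N = nestP x' k N := by
  unfold nestP
  refine foldr_congr_nest _ (fun m hm => ?_) 1
  rw [List.mem_range'_1] at hm
  exact h m hm.1 (by omega)

lemma nestP_stop (x : ℕ → G) {k N : ℕ} (h : N < k) : nestP x k N = 1 := by
  unfold nestP
  have : N + 1 - k = 0 := by omega
  simp [this]

lemma nestP_succ (x : ℕ → G) {k N : ℕ} (h : k ≤ N) :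
    nestP x k N = x k * (nestP x (k + 1) N) ^ (k + 1) := by
  unfold nestP
  have h1 : N + 1 - k = (N - k) + 1 := by omega
  have h2 : N + 1 - (k + 1) = N - k := by omega
  rw [h1, h2, List.range'_succ, List.foldr_cons]

lemma nestP_last (x : ℕ → G) {k N : ℕ} (h : k ≤ N + 1) :
    nestP x k (N + 1) =
      (List.range' k (N + 1 - k)).foldr (fun m acc => x m * acc ^ (m + 1))
        (x (N + 1) * 1 ^ (N + 2)) := by
  unfold nestP
  have h1 : N + 2 - k = (N + 1 - k) + 1 := by omega
  have h2 : k + 1 * (N + 1 - k) = N + 1 := by omega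
  rw [h1, List.range'_concat, List.foldr_append, List.foldr_cons, List.foldr_nil, h2]

lemma cont_foldr_nest (l : List ℕ) (y : ℕ → G → G) (hy : ∀ m, Continuous (y m)) :
    Continuous (fun u => l.foldr (fun m acc => y m u * acc ^ (m + 1)) 1) := by
  induction l with
  | nil => simpa using continuous_const
  | cons m l ih =>
    simp only [List.foldr_cons]
    exact Continuous.mul (hy m) (ih.pow _)

/-- Continuity of the nested product in the top variable. -/
lemma cont_nestP (x : ℕ → G) (j k N : ℕ) :
    Continuous (fun u => nestP (Function.update x j u) k N) := by
  have : (fun u => nestP (Function.update x j u) k N)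
      = fun u => (List.range' k (N + 1 - k)).foldr
          (fun m acc => (if m = j then u else x m) * acc ^ (m + 1)) 1 := by
    funext u
    unfold nestP
    exact foldr_congr_nest _ (fun m _ => Function.update_apply x j u m) 1
  rw [this]
  apply cont_foldr_nest
  intro m
  by_cases hm : m = j <;> simp [hm] <;> continuity

/-- Value of the nested product at `u = 1`. -/
lemma nestP_update_one (x : ℕ → G) {k N : ℕ} (h : k ≤ N + 1) :
    nestP (Function.update x (N + 1) 1) k (N + 1) = nestP x k N := by
  rw [nestP_last _ h]
  simp only [Function.update_self, one_mul, one_pow]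
  rw [foldr_congr_nest (x' := x) _ (fun m hm => ?_) 1]
  · rfl
  · rw [List.mem_range'_1] at hm
    exact Function.update_of_ne (by omega) _ _

variable (ψ : G →* Multiplicative ℤ)

lemma step_ex (hψ : ∀ U ∈ 𝓝 (1 : G), ∃ u ∈ U, ψ u = Multiplicative.ofAdd 1)
    (x : ℕ → G) (N : ℕ) :
    ∃ u : G, ψ u = Multiplicative.ofAdd 1 ∧
      ∀ k ≤ N + 1, dist (nestP (Function.update x (N + 1) u) k (N + 1)) (nestP x k N)
        ≤ (1 / 2 : ℝ) ^ N := by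
  set U : Set G := ⋂ k ∈ Finset.range (N + 2),
    (fun u => nestP (Function.update x (N + 1) u) k (N + 1)) ⁻¹'
      (Metric.closedBall (nestP x k N) ((1 / 2 : ℝ) ^ N)) with hU
  have hUnhds : U ∈ 𝓝 (1 : G) := by
    rw [hU]
    refine (Filter.biInter_finset_mem _).mpr (fun k hk => ?_)
    rw [Finset.mem_range] at hk
    have hc := cont_nestP x (N + 1) k (N + 1)
    refine hc.continuousAt.preimage_mem_nhds ?_
    rw [nestP_update_one x (by omega : k ≤ N + 1)]
    exact Metric.closedBall_mem_nhds _ (by positivity)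
  obtain ⟨u, huU, huψ⟩ := hψ U hUnhds
  refine ⟨u, huψ, fun k hk => ?_⟩
  rw [hU, Set.mem_iInter₂] at huU
  have := huU k (Finset.mem_range.mpr (by omega))
  simpa [Metric.mem_closedBall] using this


noncomputable def dudSeq (ψ : G →* Multiplicative ℤ)
    (hψ : ∀ U ∈ 𝓝 (1 : G), ∃ u ∈ U, ψ u = Multiplicative.ofAdd 1) : ℕ → G
  | 0 => (hψ Set.univ Filter.univ_mem).choose
  | (N + 1) =>
    (step_ex ψ hψ (fun m => if _ : m ≤ N then dudSeq ψ hψ m else 1) N).choose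

lemma dudSeq_psi (ψ : G →* Multiplicative ℤ) (hψ) (n : ℕ) :
    ψ (dudSeq ψ hψ n) = Multiplicative.ofAdd 1 := by
  cases n with
  | zero =>
    rw [dudSeq]
    exact (hψ Set.univ Filter.univ_mem).choose_spec.2
  | succ N =>
    rw [dudSeq]
    exact (step_ex ψ hψ (fun m => if _ : m ≤ N then dudSeq ψ hψ m else 1) N).choose_spec.1


lemma dudSeq_dist (ψ : G →* Multiplicative ℤ) (hψ) (k N : ℕ) :
    dist (nestP (dudSeq ψ hψ) k N) (nestP (dudSeq ψ hψ) k (N + 1)) ≤ (1 / 2 : ℝ) ^ N := by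
  set x := dudSeq ψ hψ with hx
  by_cases hk : k ≤ N + 1
  · set xf : ℕ → G := fun m => if _ : m ≤ N then x m else 1 with hxf
    have hspec := (step_ex ψ hψ xf N).choose_spec.2 k hk
    have hchoose : x (N + 1) = (step_ex ψ hψ xf N).choose := by rw [hx, dudSeq]
    have e1 : nestP (Function.update xf (N + 1) ((step_ex ψ hψ xf N).choose)) k (N + 1)
        = nestP x k (N + 1) := by
      refine nestP_congr (fun m hm1 hm2 => ?_)
      rcases Nat.lt_or_ge m (N + 1) with h | h
      · rw [Function.update_of_ne (by omega), hxf]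
        simp [Nat.lt_succ_iff.mp h]
      · have : m = N + 1 := by omega
        rw [this, Function.update_self, hchoose]
    have e2 : nestP xf k N = nestP x k N := by
      refine nestP_congr (fun m hm1 hm2 => ?_)
      rw [hxf]; simp [hm2]
    rw [e1, e2] at hspec
    rw [dist_comm]
    exact hspec
  · rw [nestP_stop x (by omega), nestP_stop x (by omega)]
    simp
  

theorem dudley_aux (ψ : G →* Multiplicative ℤ)
    (hψ : ∀ U ∈ 𝓝 (1 : G), ∃ u ∈ U, ψ u = Multiplicative.ofAdd 1) : False := by
  set x := dudSeq ψ hψ with hx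
  have hconv : ∀ k : ℕ, ∃ w : G, Tendsto (fun N => nestP x k N) atTop (𝓝 w) := by
    intro k
    apply cauchySeq_tendsto_of_complete
    apply cauchySeq_of_le_geometric (1 / 2 : ℝ) 1 (by norm_num)
    intro N
    have := dudSeq_dist ψ hψ k N
    rw [← hx] at this
    simpa using this
  choose w hw using hconv
  have hrel : ∀ k : ℕ, w k = x k * (w (k + 1)) ^ (k + 1) := by
    intro k
    have h1 : Tendsto (fun N => x k * (nestP x (k + 1) N) ^ (k + 1)) atTop
        (𝓝 (x k * (w (k + 1)) ^ (k + 1))) :=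
      tendsto_const_nhds.mul ((hw (k + 1)).pow (k + 1))
    have h2 : (fun N => nestP x k N) =ᶠ[atTop]
        (fun N => x k * (nestP x (k + 1) N) ^ (k + 1)) := by
      filter_upwards [eventually_ge_atTop k] with N hN
      exact nestP_succ x hN
    exact tendsto_nhds_unique (hw k) (h1.congr' h2.symm)
  apply no_int_seq (fun k => Multiplicative.toAdd (ψ (w k)))
  intro k
  have h3 := congrArg ψ (hrel k)
  rw [map_mul, map_pow, dudSeq_psi ψ hψ k] at h3
  have h4 := congrArg Multiplicative.toAdd h3
  rw [toAdd_mul, toAdd_pow, toAdd_ofAdd] at h4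
  simp only [nsmul_eq_mul] at h4
  rw [h4]
  push_cast
  ring


end Nest


/-- A complete metric group whose density (least cardinality of a dense subset)
is strictly less than its cardinality is not a free group. -/
theorem complete_metric_group_small_density_not_free
    (G : Type*) [Group G] [MetricSpace G] [CompleteSpace G] [IsTopologicalGroup G]
    (hdensity : ∃ s : Set G, Dense s ∧ Cardinal.mk s < Cardinal.mk G) :
    ¬ IsFreeGroup G := by
  classical
  intro hfree
  obtain ⟨s, hs, hcard⟩ := hdensity
  obtain ⟨ι, ⟨b⟩⟩ := hfree.nonempty_basis
  set e : G ≃* FreeGroup ι := b.repr with he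
  -- `s` is infinite
  have hsinf : s.Infinite := by
    by_contra hfin
    rw [Set.not_infinite] at hfin
    have huniv : s = Set.univ := by
      rw [← hfin.isClosed.closure_eq]
      exact hs.closure_eq
    rw [huniv, Cardinal.mk_univ] at hcard
    exact lt_irrefl _ hcard
  have haleph : Cardinal.aleph0 ≤ Cardinal.mk s := by
    have : Infinite s := hsinf.to_subtype
    exact Cardinal.aleph0_le_mk s
  -- the set of letters appearing in elements of `s`
  set A : G → Set ι := fun h => {i | i ∈ ((e h).toWord.map Prod.fst)} with hA
  set S0 : Set ι := ⋃ h ∈ s, A h with hS0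
  have hS0card : Cardinal.mk S0 ≤ Cardinal.mk s := by
    refine le_trans (Cardinal.mk_biUnion_le A s) ?_
    have h1 : ⨆ x : s, Cardinal.mk (A x) ≤ Cardinal.aleph0 :=
      ciSup_le' fun x => (((e x.1).toWord.map Prod.fst).finite_toSet.countable).le_aleph0
    calc Cardinal.mk s * ⨆ x : s, Cardinal.mk (A x)
        ≤ Cardinal.mk s * Cardinal.aleph0 := mul_le_mul_right h1 _
      _ = Cardinal.mk s ⊔ Cardinal.aleph0 := Cardinal.mul_eq_max haleph le_rfl
      _ = Cardinal.mk s := sup_eq_left.mpr haleph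
  -- |G| ≤ max |ι| ℵ₀
  have hGle : Cardinal.mk G ≤ Cardinal.mk ι ⊔ Cardinal.aleph0 := by
    have h1 : Cardinal.mk G = Cardinal.mk (FreeGroup ι) := Cardinal.mk_congr e.toEquiv
    have h2 : Cardinal.mk (FreeGroup ι) ≤ Cardinal.mk (List (ι × Bool)) :=
      Cardinal.mk_le_of_injective (f := FreeGroup.toWord) FreeGroup.toWord_injective
    have h3 : Cardinal.mk (ι × Bool) ≤ Cardinal.mk ι ⊔ Cardinal.aleph0 := by
      have he1 : Cardinal.mk (ι × Bool) = Cardinal.mk (ι ⊕ ι) :=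
        Cardinal.mk_congr ((Equiv.prodComm ι Bool).trans (Equiv.boolProdEquivSum ι))
      rw [he1]
      have he2 : Cardinal.mk (ι ⊕ ι) = Cardinal.mk ι + Cardinal.mk ι := by
        simp [Cardinal.mk_sum]
      rw [he2]
      refine le_trans (Cardinal.add_le_max _ _) ?_
      simp
    refine h1.le.trans (h2.trans ?_)
    refine le_trans (Cardinal.mk_list_le_max _) ?_
    exact sup_le le_sup_right h3
  have hGaleph : Cardinal.aleph0 < Cardinal.mk G := lt_of_le_of_lt haleph hcard
  have hGι : Cardinal.mk G ≤ Cardinal.mk ι := by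
    rcases le_sup_iff.mp hGle with h' | h'
    · exact h'
    · exact absurd h' (not_le.mpr hGaleph)
  -- find a generator not used in `S0`
  have hτ : ∃ τ : ι, τ ∉ S0 := by
    by_contra hno
    push_neg at hno
    have : S0 = Set.univ := Set.eq_univ_iff_forall.mpr hno
    rw [this, Cardinal.mk_univ] at hS0card
    exact absurd (hGι.trans hS0card) (not_le.mpr hcard)
  obtain ⟨τ, hτ⟩ := hτ
  -- the exponent-sum-at-τ homomorphism
  set f : ι → Multiplicative ℤ := fun i => if i = τ then Multiplicative.ofAdd 1 else 1 with hf
  set ψ : G →* Multiplicative ℤ := (FreeGroup.lift f).comp e.toMonoidHom with hψdef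
  -- ψ kills s
  have hψs : ∀ h ∈ s, ψ h = 1 := by
    intro h hhs
    have hst : ψ h = (FreeGroup.lift f) (FreeGroup.mk (e h).toWord) := by
      rw [FreeGroup.mk_toWord]
      rfl
    rw [hst, FreeGroup.lift_mk]
    apply List.prod_eq_one
    intro y hy
    rw [List.mem_map] at hy
    obtain ⟨p, hp, rfl⟩ := hy
    have hp1 : p.1 ∈ S0 := by
      refine Set.mem_biUnion hhs ?_
      rw [hA]
      exact Set.mem_setOf.mpr (List.mem_map.mpr ⟨p, hp, rfl⟩)
    have hne : p.1 ≠ τ := fun h' => hτ (h' ▸ hp1)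
    have hf1 : f p.1 = 1 := by rw [hf]; simp only [if_neg hne]
    rw [hf1]
    cases p.2 <;> simp
  -- ψ of the extra generator
  set t : G := e.symm (FreeGroup.of τ) with ht
  have hψt : ψ t = Multiplicative.ofAdd 1 := by
    rw [hψdef, ht]
    simp only [MonoidHom.comp_apply, MulEquiv.coe_toMonoidHom, MulEquiv.apply_symm_apply]
    rw [FreeGroup.lift_apply_of, hf]
    simp
  -- small elements with ψ = ofAdd 1
  have hsmall : ∀ U ∈ 𝓝 (1 : G), ∃ u ∈ U, ψ u = Multiplicative.ofAdd 1 := by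
    intro U hU
    have hc : Continuous fun g : G => g⁻¹ * t := (continuous_inv.mul continuous_const)
    have hval : (fun g : G => g⁻¹ * t) t = 1 := by simp
    have hpre : (fun g : G => g⁻¹ * t) ⁻¹' U ∈ 𝓝 t := by
      refine hc.continuousAt.preimage_mem_nhds ?_
      simpa using hU
    obtain ⟨h0, hh0pre, hh0s⟩ := mem_closure_iff_nhds.mp (hs t) _ hpre
    refine ⟨h0⁻¹ * t, hh0pre, ?_⟩
    rw [map_mul, map_inv, hψs h0 hh0s, hψt]
    simp
  exact dudley_aux ψ hsmall
end

section
/- Let G be a group equipped with a metric d such that (G,d) is a complete metric space and the maps (x,y) ↦ x·y and x ↦ x⁻¹ are continuous for the topology induced by d. If the topology induced by d on G is not discrete, then G is not a free group. -/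
namespace NotFreeAux

open FreeGroup List

variable {α : Type*} [DecidableEq α]

/-- Reducedness of a word as a chain condition. -/
def Rd (L : List (α × Bool)) : Prop :=
  List.IsChain (fun x y => ¬(x.1 = y.1 ∧ x.2 = !y.2)) L

theorem Rd.reduce_eq {L : List (α × Bool)} (h : Rd L) : FreeGroup.reduce L = L := by
  induction L with
  | nil => rfl
  | cons x L ih =>
    have hL : Rd L := h.tail
    rw [FreeGroup.reduce.cons, ih hL]
    cases L with
    | nil => rfl
    | cons y t =>
      have hxy : ¬(x.1 = y.1 ∧ x.2 = !y.2) := (List.isChain_cons_cons.1 h).1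
      simp [hxy]

theorem not_chain'_decomp {R : (α × Bool) → (α × Bool) → Prop} :
    ∀ (l : List (α × Bool)), ¬ List.IsChain R l →
      ∃ l₁ a b l₂, l = l₁ ++ a :: b :: l₂ ∧ ¬ R a b := by
  intro l
  induction l with
  | nil => intro h; exact absurd List.isChain_nil h
  | cons a t ih =>
    intro h
    cases t with
    | nil => exact absurd (List.isChain_singleton a) h
    | cons b s =>
      rw [List.isChain_cons_cons] at h
      by_cases hab : R a b
      · have : ¬ List.IsChain R (b :: s) := fun hc => h ⟨hab, hc⟩
        obtain ⟨l₁, c, d, l₂, hl, hcd⟩ := ih this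
        exact ⟨a :: l₁, c, d, l₂, by rw [hl]; rfl, hcd⟩
      · exact ⟨[], a, b, s, rfl, hab⟩

theorem rd_reduce (L : List (α × Bool)) : Rd (FreeGroup.reduce L) := by
  by_contra h
  obtain ⟨l₁, a, b, l₂, hl, hab⟩ := not_chain'_decomp _ h
  push_neg at hab
  obtain ⟨h1, h2⟩ := hab
  obtain ⟨xb, cb⟩ := b
  have ha : a = (xb, !cb) := Prod.ext h1 h2
  rw [ha] at hl
  have hl' : FreeGroup.reduce L = l₁ ++ (xb, !cb) :: (xb, !(!cb)) :: l₂ := by simpa using hl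
  exact FreeGroup.reduce.not (L₁ := L) hl'


theorem rd_toWord (x : FreeGroup α) : Rd x.toWord := by
  have := rd_reduce (α := α) x.toWord
  rwa [FreeGroup.reduce_toWord] at this

theorem invRev_cons (x : α × Bool) (L : List (α × Bool)) :
    FreeGroup.invRev (x :: L) = FreeGroup.invRev L ++ [(x.1, !x.2)] := by
  simp [FreeGroup.invRev]

theorem rd_decomp : ∀ (n : ℕ) (L : List (α × Bool)), L.length ≤ n → Rd L →
    ∃ U C, L = U ++ C ++ FreeGroup.invRev U ∧ Rd (C ++ C) ∧ (L ≠ [] → C ≠ []) := by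
  intro n
  induction n with
  | zero =>
    intro L hlen _
    have : L = [] := List.length_eq_zero_iff.1 (Nat.le_zero.1 hlen)
    exact ⟨[], [], by simp [this, FreeGroup.invRev], by simp [Rd], fun h => absurd this h⟩
  | succ n ih =>
    intro L hlen hL
    match L with
    | [] => exact ⟨[], [], by simp [FreeGroup.invRev], by simp [Rd], by simp⟩
    | [z] =>
      refine ⟨[], [z], by simp [FreeGroup.invRev], ?_, fun _ => by simp⟩
      simp [Rd, List.isChain_cons_cons]
    | z :: y :: t =>
      set M' : List (α × Bool) := y :: t with hM'def
      have hM' : M' ≠ [] := by simp [hM'def]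
      set w := M'.getLast hM' with hwdef
      by_cases hw : w.1 = z.1 ∧ w.2 = !z.2
      · -- peel the conjugating letter
        set M := M'.dropLast with hMdef
        have hsplit : z :: M' = z :: (M ++ [w]) := by
          rw [hMdef, hwdef, List.dropLast_append_getLast]
        have hMne : M ≠ [] := by
          intro hM0
          rw [hM0] at hsplit
          simp only [List.nil_append] at hsplit
          have : Rd [z, w] := by rw [hsplit] at hL; exact hL
          have hzw : ¬(z.1 = w.1 ∧ z.2 = !w.2) := (List.isChain_cons_cons.1 this).1
          exact hzw ⟨hw.1.symm, by rw [hw.2]; simp⟩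
        have hRdM : Rd M := by
          refine List.IsChain.infix hL ⟨[z], [w], ?_⟩
          rw [hsplit]; simp
        have hlenM : M.length ≤ n := by
          have h2 : (z :: M').length = M.length + 2 := by
            rw [hsplit]; simp
          omega
        obtain ⟨U', C, hM, hCC, hCne⟩ := ih M hlenM hRdM
        refine ⟨z :: U', C, ?_, hCC, fun _ => hCne hMne⟩
        rw [hsplit, hM, invRev_cons]
        have hw' : w = (z.1, !z.2) := Prod.ext hw.1 hw.2
        rw [hw']
        simp
      · -- L is cyclically reduced
        refine ⟨[], z :: M', by simp [FreeGroup.invRev], ?_, fun _ => by simp⟩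
        refine List.isChain_append.2 ⟨hL, hL, ?_⟩
        intro a ha b hb
        have hge : (z :: M').getLast? = some w := by
          rw [hwdef, List.getLast?_eq_getLast (l := z :: M') (by simp), List.getLast_cons hM']
        rw [hge] at ha
        simp only [Option.mem_some_iff] at ha
        simp only [List.head?_cons, Option.mem_some_iff] at hb
        subst ha hb
        exact hw

theorem mk_pow_list (C : List (α × Bool)) (p : ℕ) :
    (FreeGroup.mk C) ^ p = FreeGroup.mk (List.flatten (List.replicate p C)) := by
  induction p with
  | zero => rw [pow_zero, List.replicate_zero]; rfl
  | succ p ihp =>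
    rw [pow_succ', ihp, FreeGroup.mul_mk, List.replicate_succ, List.flatten_cons]

theorem head?_join_replicate {C : List (α × Bool)} (hC : C ≠ []) (p : ℕ) (hp : 1 ≤ p)
    (V : List (α × Bool)) :
    (List.flatten (List.replicate p C) ++ V).head? = C.head? := by
  obtain ⟨c, C', rfl⟩ : ∃ c C', C = c :: C' := by
    cases C with
    | nil => exact absurd rfl hC
    | cons c C' => exact ⟨c, C', rfl⟩
  obtain ⟨q, rfl⟩ : ∃ q, p = q + 1 := ⟨p - 1, by omega⟩
  rw [List.replicate_succ, List.flatten_cons]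
  simp

theorem rep_rd {C V : List (α × Bool)} (hC : C ≠ []) (hCV : Rd (C ++ V)) (hCC : Rd (C ++ C)) :
    ∀ p, Rd (List.flatten (List.replicate p C) ++ V) := by
  intro p
  induction p with
  | zero =>
    rw [List.replicate_zero, List.flatten_nil, List.nil_append]
    exact List.IsChain.suffix hCV ⟨C, rfl⟩
  | succ p ihp =>
    rw [List.replicate_succ, List.flatten_cons, List.append_assoc]
    refine List.isChain_append.2 ⟨List.IsChain.prefix hCV ⟨V, rfl⟩, ihp, ?_⟩
    intro a ha b hb
    rcases Nat.eq_zero_or_pos p with hp | hp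
    · subst hp
      simp only [List.replicate_zero, List.flatten_nil, List.nil_append] at hb ⊢
      exact (List.isChain_append.1 hCV).2.2 a ha b hb
    · rw [head?_join_replicate hC p hp] at hb
      exact (List.isChain_append.1 hCC).2.2 a ha b hb

theorem norm_pow_ge (x : FreeGroup α) (hx : x ≠ 1) (p : ℕ) (hp : 1 ≤ p) :
    p ≤ FreeGroup.norm (x ^ p) ∧ FreeGroup.norm x ≤ FreeGroup.norm (x ^ p) := by
  have hRd : Rd x.toWord := rd_toWord x
  have hne : x.toWord ≠ [] := fun h => hx (FreeGroup.toWord_eq_nil_iff.1 h)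
  obtain ⟨U, C, hdec, hCC, hCne⟩ := rd_decomp x.toWord.length x.toWord le_rfl hRd
  have hC : C ≠ [] := hCne hne
  -- algebraic identity
  have hxeq : x = FreeGroup.mk U * FreeGroup.mk C * (FreeGroup.mk U)⁻¹ := by
    rw [FreeGroup.inv_mk, FreeGroup.mul_mk, FreeGroup.mul_mk, ← hdec, FreeGroup.mk_toWord]
  have hxp : x ^ p = FreeGroup.mk (U ++ List.flatten (List.replicate p C) ++ FreeGroup.invRev U) := by
    rw [hxeq, conj_pow, mk_pow_list, ← FreeGroup.mul_mk, ← FreeGroup.mul_mk, FreeGroup.inv_mk]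
  -- the word is reduced
  have hRd' : Rd (U ++ (C ++ FreeGroup.invRev U)) := by
    have h := hRd
    rw [hdec, List.append_assoc] at h
    exact h
  have hRdCV : Rd (C ++ FreeGroup.invRev U) :=
    List.IsChain.suffix hRd' ⟨U, rfl⟩
  have hT : Rd (List.flatten (List.replicate p C) ++ FreeGroup.invRev U) :=
    rep_rd hC hRdCV hCC p
  have hW : Rd (U ++ (List.flatten (List.replicate p C) ++ FreeGroup.invRev U)) := by
    refine List.isChain_append.2 ⟨List.IsChain.prefix hRd' ⟨C ++ FreeGroup.invRev U, rfl⟩, hT, ?_⟩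
    intro a ha b hb
    rw [head?_join_replicate hC p hp] at hb
    have hj := (List.isChain_append.1 hRd').2.2 a ha
    apply hj
    cases C with
    | nil => exact absurd rfl hC
    | cons c C' => simpa using hb
  have htw : (x ^ p).toWord = U ++ List.flatten (List.replicate p C) ++ FreeGroup.invRev U := by
    rw [hxp, FreeGroup.toWord_mk]
    exact Rd.reduce_eq (by rwa [List.append_assoc])
  have hlen : FreeGroup.norm (x ^ p)
      = U.length + p * C.length + U.length := by
    rw [FreeGroup.norm, htw]
    simp only [List.length_append, FreeGroup.invRev_length, List.length_flatten,
      List.map_replicate, List.sum_replicate, smul_eq_mul]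
  have hlenx : FreeGroup.norm x = U.length + C.length + U.length := by
    rw [FreeGroup.norm, hdec]
    simp only [List.length_append, FreeGroup.invRev_length]
  have hCpos : 1 ≤ C.length := List.length_pos_iff.2 hC
  have h1 : p ≤ p * C.length := le_trans (Nat.le_mul_of_pos_right p hCpos) le_rfl
  have h2 : C.length ≤ p * C.length := Nat.le_mul_of_pos_left C.length hp
  constructor
  · rw [hlen]
    exact le_trans h1 (le_trans (Nat.le_add_left _ _) (Nat.le_add_right _ _))
  · rw [hlenx, hlen]
    exact Nat.add_le_add (Nat.add_le_add_left h2 _) le_rfl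

section Analytic

open Filter Topology

variable {G : Type*} [Group G] [MetricSpace G] [IsTopologicalGroup G]

/-- The exponent used at stage `m`. -/
def pexp (N : G → ℕ) (f : ℕ → G) (m : ℕ) : ℕ :=
  (∑ i ∈ Finset.range (m + 1), N (f i)) + m + 1

/-- One step map. -/
def Fm (N : G → ℕ) (f : ℕ → G) (m : ℕ) (y : G) : G :=
  f m * y ^ (pexp N f m)

/-- Composite `Fm n ∘ Fm (n+1) ∘ ... ∘ Fm (n+k)`. -/
def Psi (N : G → ℕ) (f : ℕ → G) (n : ℕ) : ℕ → G → G
  | 0 => Fm N f n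
  | (k+1) => fun y => Psi N f n k (Fm N f (n + k + 1) y)

theorem psi_succ_left (N : G → ℕ) (f : ℕ → G) (n k : ℕ) :
    Psi N f n (k+1) = fun y => Fm N f n (Psi N f (n+1) k y) := by
  induction k generalizing n with
  | zero => rfl
  | succ k ih =>
    funext y
    show Psi N f n (k+1) (Fm N f (n + k + 1 + 1) y)
      = Fm N f n (Psi N f (n+1) k (Fm N f (n + 1 + k + 1) y))
    rw [ih]
    have : n + k + 1 + 1 = n + 1 + k + 1 := by omega
    rw [this]

theorem cont_Fm (N : G → ℕ) (f : ℕ → G) (m : ℕ) : Continuous (Fm N f m) :=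
  continuous_const.mul (continuous_pow (pexp N f m))

theorem cont_Psi (N : G → ℕ) (f : ℕ → G) (n : ℕ) : ∀ k, Continuous (Psi N f n k)
  | 0 => cont_Fm N f n
  | (k+1) => (cont_Psi N f n k).comp (cont_Fm N f (n + k + 1))

theorem pexp_congr {N : G → ℕ} {f g : ℕ → G} {m : ℕ} (h : ∀ i ≤ m, f i = g i) :
    pexp N f m = pexp N g m := by
  unfold pexp
  congr 2
  exact Finset.sum_congr rfl fun i hi => by rw [h i (by simpa [Nat.lt_succ_iff] using hi)]

theorem Fm_congr {N : G → ℕ} {f g : ℕ → G} {m : ℕ} (h : ∀ i ≤ m, f i = g i) :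
    Fm N f m = Fm N g m := by
  funext y
  unfold Fm
  rw [h m le_rfl, pexp_congr h]

theorem psi_congr {N : G → ℕ} {f g : ℕ → G} {n : ℕ} :
    ∀ {k : ℕ}, (∀ i ≤ n + k, f i = g i) → Psi N f n k = Psi N g n k
  | 0, h => Fm_congr (by simpa using h)
  | (k+1), h => by
    funext y
    show Psi N f n k (Fm N f (n + k + 1) y) = Psi N g n k (Fm N g (n + k + 1) y)
    rw [Fm_congr (fun i hi => h i (by omega)), psi_congr (fun i hi => h i (by omega))]

theorem exists_ne_one_mem (hnd : ¬ DiscreteTopology G) {U : Set G} (hU : IsOpen U)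
    (h1 : (1:G) ∈ U) : ∃ y ∈ U, y ≠ 1 := by
  by_contra h
  push_neg at h
  have hU1 : U = {1} := Set.Subset.antisymm (fun y hy => h y hy) (by simpa using h1)
  exact hnd (discreteTopology_iff_isOpen_singleton_one.2 (hU1 ▸ hU))

theorem exists_step (hnd : ¬ DiscreteTopology G) (N : G → ℕ) (l : List G) :
    ∃ y : G, y ≠ 1 ∧ ∀ n < l.length,
      dist (Psi N (fun k => l.getD k 1) n (l.length - 1 - n) y)
           (Psi N (fun k => l.getD k 1) n (l.length - 1 - n) 1) < (1/2 : ℝ) ^ l.length := by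
  set fl : ℕ → G := fun k => l.getD k 1
  set S : Set G := {y | ∀ n < l.length,
    dist (Psi N fl n (l.length - 1 - n) y) (Psi N fl n (l.length - 1 - n) 1)
      < (1/2 : ℝ) ^ l.length}
  have hopen : IsOpen S := by
    have hS : S = ⋂ n ∈ Finset.range l.length,
        ((fun y => dist (Psi N fl n (l.length - 1 - n) y) (Psi N fl n (l.length - 1 - n) 1)) ⁻¹'
          Set.Iio ((1/2 : ℝ) ^ l.length)) := by
      ext y
      simp [S, Finset.mem_range]
    rw [hS]
    exact isOpen_biInter_finset fun n _ =>
      (((cont_Psi N fl n _).dist continuous_const).isOpen_preimage _ isOpen_Iio)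
  have h1 : (1:G) ∈ S := by
    intro n hn
    simpa using pow_pos (by norm_num : (0:ℝ) < 1/2) l.length
  obtain ⟨y, hyS, hy1⟩ := exists_ne_one_mem hnd hopen h1
  exact ⟨y, hy1, hyS⟩

variable (hnd : ¬ DiscreteTopology G) (N : G → ℕ)

/-- The next small element, given the previously chosen ones. -/
noncomputable def step (l : List G) : G := (exists_step hnd N l).choose

/-- The list of the first `m` chosen elements. -/
noncomputable def pl : ℕ → List G
  | 0 => []
  | (m+1) => pl m ++ [step hnd N (pl m)]

/-- The sequence of small elements. -/
noncomputable def hs (m : ℕ) : G := step hnd N (pl hnd N m)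

theorem pl_length (m : ℕ) : (pl hnd N m).length = m := by
  induction m with
  | zero => rfl
  | succ m ih => simp [pl, ih]

theorem pl_getD : ∀ m, ∀ k < m, (pl hnd N m).getD k 1 = hs hnd N k := by
  intro m
  induction m with
  | zero => intro k hk; omega
  | succ m ih =>
    intro k hk
    show (pl hnd N m ++ [step hnd N (pl hnd N m)]).getD k 1 = hs hnd N k
    rcases Nat.lt_or_ge k m with h | h
    · rw [List.getD_append _ _ _ _ (by rw [pl_length]; omega)]
      exact ih k h
    · have hkm : k = m := by omega
      subst hkm
      rw [List.getD_append_right _ _ _ _ (by rw [pl_length])]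
      simp [pl_length, hs]

theorem hs_ne_one (m : ℕ) : hs hnd N m ≠ 1 :=
  (exists_step hnd N (pl hnd N m)).choose_spec.1

theorem hs_spec (m : ℕ) : ∀ n ≤ m,
    dist (Psi N (hs hnd N) n (m - n) (hs hnd N (m+1))) (Psi N (hs hnd N) n (m - n) 1)
      < (1/2 : ℝ) ^ (m+1) := by
  intro n hn
  have key : ∀ (L : List G), L.length = m + 1 → (∀ k < m + 1, L.getD k 1 = hs hnd N k) →
      ∀ y : G, (∀ n' < L.length,
        dist (Psi N (fun k => L.getD k 1) n' (L.length - 1 - n') y)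
             (Psi N (fun k => L.getD k 1) n' (L.length - 1 - n') 1) < (1/2 : ℝ) ^ L.length) →
      dist (Psi N (hs hnd N) n (m - n) y) (Psi N (hs hnd N) n (m - n) 1)
        < (1/2 : ℝ) ^ (m+1) := by
    intro L hL hGd y hy
    have hspec := hy n (by omega)
    rw [hL] at hspec
    have hms : m + 1 - 1 - n = m - n := by omega
    rw [hms] at hspec
    have hcong : Psi N (fun k => L.getD k 1) n (m - n) = Psi N (hs hnd N) n (m - n) :=
      psi_congr (fun i hi => hGd i (by omega))
    rwa [hcong] at hspec
  exact key (pl hnd N (m+1)) (pl_length hnd N (m+1)) (pl_getD hnd N (m+1)) _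
    (exists_step hnd N (pl hnd N (m+1))).choose_spec.2

/-- The partial products. -/
noncomputable def xseq (n k : ℕ) : G := Psi N (hs hnd N) n k 1

theorem dist_xseq (n k : ℕ) :
    dist (xseq hnd N n k) (xseq hnd N n (k+1)) ≤ (1/2 : ℝ) ^ (n+1) * (1/2) ^ k := by
  have h1 : xseq hnd N n (k+1) = Psi N (hs hnd N) n k (hs hnd N (n+k+1)) := by
    show Psi N (hs hnd N) n k (Fm N (hs hnd N) (n+k+1) 1) = _
    rw [Fm, one_pow, mul_one]
  have h2 := hs_spec hnd N (n+k) n (by omega)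
  rw [Nat.add_sub_cancel_left] at h2
  rw [h1, dist_comm]
  calc dist (Psi N (hs hnd N) n k (hs hnd N (n+k+1))) (xseq hnd N n k)
      = dist (Psi N (hs hnd N) n k (hs hnd N (n+k+1))) (Psi N (hs hnd N) n k 1) := rfl
    _ ≤ (1/2 : ℝ) ^ (n+k+1) := le_of_lt h2
    _ = (1/2 : ℝ) ^ (n+1) * (1/2) ^ k := by rw [← pow_add]; ring_nf

theorem main_analytic {G : Type*} [Group G] [MetricSpace G] [IsTopologicalGroup G] [CompleteSpace G]
    (hnd : ¬ DiscreteTopology G) (N : G → ℕ)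
    (None : N 1 = 0) (Ninv : ∀ a : G, N a⁻¹ = N a)
    (Nmul : ∀ a b : G, N (a * b) ≤ N a + N b)
    (Npow : ∀ a : G, a ≠ 1 → ∀ p : ℕ, 1 ≤ p → p ≤ N (a ^ p) ∧ N a ≤ N (a ^ p)) : False := by
  -- limits of the partial products
  have hcauchy : ∀ n, CauchySeq (xseq hnd N n) := fun n =>
    cauchySeq_of_le_geometric (1/2) ((1/2 : ℝ) ^ (n+1)) (by norm_num)
      (fun k => dist_xseq hnd N n k)
  have hex : ∀ n, ∃ l : G, Tendsto (xseq hnd N n) atTop (𝓝 l) := fun n =>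
    cauchySeq_tendsto_of_complete (hcauchy n)
  choose g hg using hex
  -- the algebraic relation
  have grel : ∀ n, g n = hs hnd N n * (g (n+1)) ^ (pexp N (hs hnd N) n) := by
    intro n
    have h1 : Tendsto (fun k => xseq hnd N n (k+1)) atTop (𝓝 (g n)) :=
      (hg n).comp (tendsto_add_atTop_nat 1)
    have h2 : (fun k => xseq hnd N n (k+1))
        = fun k => Fm N (hs hnd N) n (xseq hnd N (n+1) k) := by
      funext k
      show Psi N (hs hnd N) n (k+1) 1 = _
      rw [psi_succ_left]
      rfl
    have h3 : Tendsto (fun k => Fm N (hs hnd N) n (xseq hnd N (n+1) k)) atTop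
        (𝓝 (Fm N (hs hnd N) n (g (n+1)))) :=
      ((cont_Fm N (hs hnd N) n).tendsto _).comp (hg (n+1))
    rw [h2] at h1
    exact tendsto_nhds_unique h1 h3
  -- infinitely many nontrivial limits
  have hinf : ∀ M, ∃ m, M ≤ m ∧ g m ≠ 1 := by
    intro M
    by_contra hc
    push_neg at hc
    have hM := grel M
    rw [hc M le_rfl, hc (M+1) (by omega), one_pow, mul_one] at hM
    exact hs_ne_one hnd N M hM.symm
  -- norm estimates
  have hpow_eq : ∀ n, (g (n+1)) ^ (pexp N (hs hnd N) n) = (hs hnd N n)⁻¹ * g n := by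
    intro n
    rw [grel n, ← mul_assoc, inv_mul_cancel, one_mul]
  have key1 : ∀ n, N (g (n+1)) ≤ N (g n) + N (hs hnd N n) := by
    intro n
    rcases eq_or_ne (g (n+1)) 1 with h | h
    · rw [h, None]; omega
    · have h1 := (Npow _ h (pexp N (hs hnd N) n) (by unfold pexp; omega)).2
      have h2 : N ((g (n+1)) ^ (pexp N (hs hnd N) n)) ≤ N (hs hnd N n) + N (g n) := by
        rw [hpow_eq n]
        calc N ((hs hnd N n)⁻¹ * g n) ≤ N (hs hnd N n)⁻¹ + N (g n) := Nmul _ _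
          _ = N (hs hnd N n) + N (g n) := by rw [Ninv]
      omega
  have key2 : ∀ n, N (g n) ≤ N (g 0) + ∑ i ∈ Finset.range n, N (hs hnd N i) := by
    intro n
    induction n with
    | zero => simp
    | succ n ih =>
      have := key1 n
      rw [Finset.sum_range_succ]
      omega
  have key3 : ∀ n, g (n+1) ≠ 1 → n + 1 ≤ N (g 0) := by
    intro n hne
    have h1 := (Npow _ hne (pexp N (hs hnd N) n) (by unfold pexp; omega)).1
    have h2 : N ((g (n+1)) ^ (pexp N (hs hnd N) n)) ≤ N (hs hnd N n) + N (g n) := by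
      rw [hpow_eq n]
      calc N ((hs hnd N n)⁻¹ * g n) ≤ N (hs hnd N n)⁻¹ + N (g n) := Nmul _ _
        _ = N (hs hnd N n) + N (g n) := by rw [Ninv]
    have h3 : pexp N (hs hnd N) n
        = (∑ i ∈ Finset.range n, N (hs hnd N i)) + N (hs hnd N n) + n + 1 := by
      unfold pexp
      rw [Finset.sum_range_succ]
    have h4 := key2 n
    omega
  obtain ⟨m, hm1, hm2⟩ := hinf (N (g 0) + 1)
  obtain ⟨n, rfl⟩ : ∃ n, m = n + 1 := ⟨m - 1, by omega⟩
  have := key3 n hm2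
  omega

end Analytic

end NotFreeAux

/-- A complete metric group whose topology is not discrete is not a free group. -/
theorem complete_metric_group_nondiscrete_not_free
    (G : Type*) [Group G] [MetricSpace G] [CompleteSpace G] [IsTopologicalGroup G]
    (hnd : ¬ DiscreteTopology G) :
    ¬ IsFreeGroup G := by
  intro hfree
  classical
  haveI := hfree
  set e := IsFreeGroup.toFreeGroup G with he
  set N : G → ℕ := fun x => FreeGroup.norm (e x) with hN
  refine NotFreeAux.main_analytic hnd N ?_ ?_ ?_ ?_
  · simp [hN]
  · intro a; simp [hN]
  · intro a b
    simp only [hN, map_mul]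
    exact FreeGroup.norm_mul_le _ _
  · intro a ha p hp
    have hea : e a ≠ 1 := fun h => ha (by simpa using (MulEquiv.map_eq_one_iff e).1 h)
    have := NotFreeAux.norm_pow_ge (e a) hea p hp
    simpa [hN, map_pow] using this
end

section
/- Let (G,d) be a complete metric group whose density is strictly less than the cardinality of G, and assume G is ℵ₁-free, i.e. every countable subgroup of G is a free group. Then there is a countable subset A of G such that no countable subgroup of G containing A is a retract of G. -/
open List

namespace FGAux

variable {α : Type*} [DecidableEq α]

open FreeGroup

/-- non-cancelling adjacency relation -/
def R : (α × Bool) → (α × Bool) → Prop := fun a b => ¬(a.1 = b.1 ∧ a.2 = !b.2)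

instance : DecidableRel (R (α := α)) := fun a b => by unfold R; infer_instance

lemma chain'_reduce (L : List (α × Bool)) : List.Chain' R (FreeGroup.reduce L) := by
  induction L with
  | nil => exact List.isChain_nil
  | cons x L ih =>
    rw [FreeGroup.reduce.cons]
    rcases h : FreeGroup.reduce L with _ | ⟨hd, tl⟩
    · exact List.isChain_singleton _
    · rw [h] at ih
      by_cases hc : x.1 = hd.1 ∧ x.2 = !hd.2
      · simp only [hc, if_true]
        exact ih.tail
      · simp only [hc, if_false]
        exact List.isChain_cons_cons.2 ⟨hc, ih⟩

lemma reduce_eq_self_of_chain' {L : List (α × Bool)} (h : List.Chain' R L) :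
    FreeGroup.reduce L = L := by
  induction L with
  | nil => simp
  | cons x L ih =>
    rw [FreeGroup.reduce.cons, ih h.tail]
    rcases L with _ | ⟨hd, tl⟩
    · rfl
    · have := List.isChain_cons_cons.1 h
      exact if_neg this.1

lemma chain'_toWord (x : FreeGroup α) : List.Chain' R x.toWord := by
  rw [← FreeGroup.reduce_toWord]
  exact chain'_reduce _

lemma toWord_mul_of_chain' {x y : FreeGroup α}
    (h : List.Chain' R (x.toWord ++ y.toWord)) :
    (x * y).toWord = x.toWord ++ y.toWord := by
  conv_lhs => rw [← FreeGroup.mk_toWord (x := x), ← FreeGroup.mk_toWord (x := y)]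
  rw [FreeGroup.mul_mk, FreeGroup.toWord_mk, reduce_eq_self_of_chain' h]

end FGAux

namespace FGAux

variable {α : Type*} [DecidableEq α]

/-- A cyclically reduced nonempty word -/
def CR (L : List (α × Bool)) : Prop :=
  L ≠ [] ∧ List.Chain' R L ∧ ∀ a ∈ L.getLast?, ∀ b ∈ L.head?, R a b

lemma flat_spec {L : List (α × Bool)} (hL : CR L) (k : ℕ) (hk : 1 ≤ k) :
    List.Chain' R (List.flatten (List.replicate k L)) ∧
      (List.flatten (List.replicate k L)).head? = L.head? ∧
      (List.flatten (List.replicate k L)).getLast? = L.getLast? := by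
  obtain ⟨hne, hch, hjun⟩ := hL
  induction k with
  | zero => omega
  | succ k ih =>
    rcases Nat.eq_or_lt_of_le hk with h1 | h2
    · obtain rfl : k = 0 := by omega
      rw [show List.flatten (List.replicate 1 L) = L by simp]
      exact ⟨hch, rfl, rfl⟩
    · have hk1 : 1 ≤ k := by omega
      obtain ⟨ich, ihd, ilast⟩ := ih hk1
      have hflat : List.flatten (List.replicate (k+1) L)
          = L ++ List.flatten (List.replicate k L) := by
        rw [List.replicate_succ, List.flatten_cons]
      have hfne : List.flatten (List.replicate k L) ≠ [] := by
        intro h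
        rw [h] at ihd
        simp at ihd
        exact hne (List.head?_eq_none_iff.1 ihd.symm)
      refine ⟨?_, ?_, ?_⟩
      · rw [hflat, List.Chain', List.isChain_append]
        refine ⟨hch, ich, ?_⟩
        intro a ha b hb
        rw [ihd] at hb
        exact hjun a ha b hb
      · rw [hflat, List.head?_append, List.head?_eq_head hne]
        rfl
      · rw [hflat, List.getLast?_append, ilast]
        rw [List.getLast?_eq_getLast hne]
        rfl
end FGAux

namespace FGAux

variable {α : Type*} [DecidableEq α]

open FreeGroup

lemma invRev_append (L₁ L₂ : List (α × Bool)) :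
    FreeGroup.invRev (L₁ ++ L₂) = FreeGroup.invRev L₂ ++ FreeGroup.invRev L₁ := by
  simp [FreeGroup.invRev]

lemma conj_conj (g p c : FreeGroup α) : g * (p * c * p⁻¹) * g⁻¹ = (g*p) * c * (g*p)⁻¹ := by
  group

lemma decomp : ∀ (n : ℕ) (x : FreeGroup α), x.norm = n → x ≠ 1 →
    ∃ p c : FreeGroup α, x = p * c * p⁻¹ ∧ c ≠ 1 ∧ CR c.toWord ∧
      x.toWord = p.toWord ++ c.toWord ++ (p⁻¹).toWord := by
  intro n
  induction n using Nat.strong_induction_on with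
  | _ n ih =>
    intro x hn hx
    have hLne : x.toWord ≠ [] := fun h => hx (FreeGroup.toWord_eq_nil_iff.1 h)
    have hch : List.Chain' R x.toWord := chain'_toWord x
    by_cases hj : ∀ a ∈ x.toWord.getLast?, ∀ b ∈ x.toWord.head?, R a b
    · refine ⟨1, x, by group, hx, ⟨hLne, hch, hj⟩, ?_⟩
      rw [FreeGroup.toWord_one, inv_one, FreeGroup.toWord_one]
      simp
    · -- the word starts and ends with cancelling letters
      push_neg at hj
      obtain ⟨a, ha, b, hb, hab⟩ := hj
      have hab' : a.1 = b.1 ∧ a.2 = !b.2 := not_not.1 hab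
      obtain ⟨b0, t, h1⟩ : ∃ b0 t, x.toWord = b0 :: t :=
        List.exists_cons_of_ne_nil hLne
      have hbb0 : b = b0 := by
        rw [h1] at hb; exact (by simpa using hb : b0 = b).symm
      subst hbb0
      rcases List.eq_nil_or_concat t with rfl | ⟨M, a0, rfl⟩
      · -- single letter: impossible
        rw [h1] at ha
        have : a = b := by exact (by simpa using ha : b = a).symm
        rw [this] at hab'
        exact absurd hab'.2 (by simp)
      simp only [List.concat_eq_append] at h1
      have haa0 : a = a0 := by
        have h' : a ∈ ((b :: M) ++ [a0]).getLast? := by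
          rw [show (b :: M) ++ [a0] = b :: (M ++ [a0]) from rfl, ← h1]; exact ha
        rw [List.getLast?_append] at h'
        exact (by simpa using h' : a0 = a).symm
      subst haa0
      have hLsplit : x.toWord = b :: (M ++ [a]) := h1
      have haval : a = (b.1, !b.2) := Prod.ext hab'.1 hab'.2
      -- define g and y
      set g : FreeGroup α := FreeGroup.mk [b] with hgdef
      set y : FreeGroup α := FreeGroup.mk M with hydef
      have hginv : g⁻¹ = FreeGroup.mk [a] := by
        rw [hgdef, FreeGroup.inv_mk]
        congr 1
        rw [haval]
        simp [FreeGroup.invRev]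
      have hxgy : x = g * y * g⁻¹ := by
        rw [hginv, hgdef, hydef, FreeGroup.mul_mk, FreeGroup.mul_mk,
          ← FreeGroup.mk_toWord (x := x), hLsplit]
        simp
      -- chain facts
      have hchL : List.Chain' R (b :: (M ++ [a])) := by rw [← hLsplit]; exact hch
      have hchMa : List.Chain' R (M ++ [a]) := hchL.tail
      have hchM : List.Chain' R M := (List.isChain_append.1 hchMa).1
      have hyword : y.toWord = M := by
        rw [hydef, FreeGroup.toWord_mk, reduce_eq_self_of_chain' hchM]
      have hyne : y ≠ 1 := by
        intro h
        rw [h, mul_one, mul_inv_cancel] at hxgy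
        exact hx hxgy
      have hMlen : M.length + 2 = n := by
        have hl : x.toWord.length = n := hn
        rw [hLsplit] at hl
        simp at hl
        omega
      have hynorm : y.norm = M.length := by rw [FreeGroup.norm, hyword]
      obtain ⟨p, c, hy, hc1, hcr, hw⟩ := ih M.length (by omega) y (by omega) hyne
      have hMeq : M = p.toWord ++ c.toWord ++ (p⁻¹).toWord := by rw [← hyword, hw]
      refine ⟨g * p, c, ?_, hc1, hcr, ?_⟩
      · rw [hxgy, hy, conj_conj]
      · -- word computation
        have hgword : g.toWord = [b] := by
          rw [hgdef, FreeGroup.toWord_mk, FreeGroup.reduce_singleton]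
        have huword : (g * p).toWord = b :: p.toWord := by
          rw [toWord_mul_of_chain' (x := g) (y := p), hgword]
          · rfl
          · rw [hgword]
            rcases hp : p.toWord with _ | ⟨ph, pt⟩
            · exact List.isChain_singleton _
            · have hMcons : M = ph :: (pt ++ c.toWord ++ (p⁻¹).toWord) := by
                rw [hMeq, hp]; simp
              have hRbph : R b ph := by
                have := List.isChain_cons.1 hchL
                apply this.1
                rw [hMcons]
                rfl
              refine List.isChain_cons_cons.2 ⟨hRbph, ?_⟩
              rw [← hp]; exact chain'_toWord p
        have huinv : ((g * p)⁻¹).toWord = (p⁻¹).toWord ++ [a] := by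
          rw [FreeGroup.toWord_inv, huword, show b :: p.toWord = [b] ++ p.toWord from rfl,
            invRev_append, FreeGroup.toWord_inv]
          congr 1
          rw [haval]
          simp [FreeGroup.invRev]
        rw [huword, huinv, hLsplit, hMeq]
        simp [List.append_assoc]

end FGAux

namespace FGAux

variable {α : Type*} [DecidableEq α]

open FreeGroup

lemma toWord_pow_of_CR {c : FreeGroup α} (h : CR c.toWord) {k : ℕ} (hk : 1 ≤ k) :
    (c ^ k).toWord = List.flatten (List.replicate k c.toWord) := by
  conv_lhs => rw [← FreeGroup.mk_toWord (x := c)]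
  rw [FreeGroup.pow_mk, FreeGroup.toWord_mk, reduce_eq_self_of_chain' (flat_spec h k hk).1]

lemma conj_pow_eq (p c : FreeGroup α) (k : ℕ) : (p * c * p⁻¹) ^ k = p * c ^ k * p⁻¹ := by
  induction k with
  | zero => simp
  | succ m ihm => rw [pow_succ, ihm, pow_succ]; group

/-- The key free-group fact: for `x ≠ 1` and `k ≥ 1`,
`norm x ≤ norm (x^k)` and `k ≤ norm (x^k)`. -/
lemma norm_pow_key (x : FreeGroup α) (hx : x ≠ 1) {k : ℕ} (hk : 1 ≤ k) :
    x.norm ≤ (x ^ k).norm ∧ k ≤ (x ^ k).norm := by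
  obtain ⟨p, c, hxe, hc1, hcr, hw⟩ := decomp x.norm x rfl hx
  set A := p.toWord with hA'
  set B := c.toWord with hB'
  set C := (p⁻¹).toWord with hC'
  set Bk := List.flatten (List.replicate k B) with hBk'
  have hBne : B ≠ [] := fun h => hc1 (FreeGroup.toWord_eq_nil_iff.1 h)
  obtain ⟨hchBk, hBkhd, hBklast⟩ := flat_spec hcr k hk
  have hchx : List.Chain' R ((A ++ B) ++ C) := by
    have := chain'_toWord x
    rw [hw] at this
    exact this
  rw [List.Chain', List.isChain_append] at hchx
  obtain ⟨hchAB, hchC, j2⟩ := hchx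
  rw [List.isChain_append] at hchAB
  obtain ⟨hchA, hchB, j1⟩ := hchAB
  have hchT : List.Chain' R ((A ++ Bk) ++ C) := by
    rw [List.Chain', List.isChain_append]
    refine ⟨?_, hchC, ?_⟩
    · rw [List.isChain_append]
      refine ⟨hchA, hchBk, ?_⟩
      intro u hu v hv
      exact j1 u hu v (by rw [← hBkhd]; exact hv)
    · intro u hu v hv
      apply j2 u ?_ v hv
      rw [List.getLast?_append] at hu ⊢
      rw [← hBklast]
      exact hu
  have hp : FreeGroup.mk A = p := FreeGroup.mk_toWord
  have hpi : FreeGroup.mk C = p⁻¹ := FreeGroup.mk_toWord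
  have hck : c ^ k = FreeGroup.mk Bk := by
    conv_lhs => rw [← FreeGroup.mk_toWord (x := c)]
    rw [FreeGroup.pow_mk]
  have hxk : (x ^ k) = FreeGroup.mk ((A ++ Bk) ++ C) := by
    rw [hxe, conj_pow_eq, hck, ← hpi, ← hp, FreeGroup.mul_mk, FreeGroup.mul_mk]
  have hword : (x ^ k).toWord = (A ++ Bk) ++ C := by
    rw [hxk, FreeGroup.toWord_mk, reduce_eq_self_of_chain' hchT]
  have hnormk : (x ^ k).norm = A.length + k * B.length + C.length := by
    rw [FreeGroup.norm, hword]
    simp [hBk', List.length_flatten, List.map_replicate, List.sum_replicate, smul_eq_mul]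
    ring
  have hnorm : x.norm = A.length + B.length + C.length := by
    rw [FreeGroup.norm, hw]
    simp [Nat.add_assoc]
  have hB1 : 1 ≤ B.length := List.length_pos_iff.2 hBne
  constructor
  · rw [hnorm, hnormk]
    have : B.length ≤ k * B.length := Nat.le_mul_of_pos_left _ (by omega)
    omega
  · rw [hnormk]
    have : k ≤ k * B.length := Nat.le_mul_of_pos_right _ (by omega)
    omega

end FGAux

namespace FGAux

open FreeGroup

lemma no_nested_powers {β : Type*} [DecidableEq β] (v w : ℕ → FreeGroup β) (k : ℕ → ℕ)
    (hv : ∀ n, v n ≠ 1)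
    (hrel : ∀ n, w n = v n * (w (n + 1)) ^ (k (n + 1)))
    (hk : ∀ n, n + 2 + (Finset.range (n + 1)).sum
        (fun j => (v j).norm + ((v j)⁻¹).norm) ≤ k (n + 1)) :
    False := by
  set S : ℕ → ℕ := fun n => (Finset.range n).sum
    (fun j => (v j).norm + ((v j)⁻¹).norm) with hS
  have hk1 : ∀ n, 1 ≤ k (n + 1) := fun n => le_trans (by omega) (hk n)
  have hpow : ∀ n, (w (n + 1)) ^ (k (n + 1)) = (v n)⁻¹ * w n := by
    intro n
    rw [hrel n]
    group
  -- upper bound on norms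
  have claim1 : ∀ n, (w n).norm ≤ (w 0).norm + S n := by
    intro n
    induction n with
    | zero => simp
    | succ n ihn =>
      have h1 : (w (n + 1)).norm ≤ ((w (n + 1)) ^ (k (n + 1))).norm := by
        by_cases hw1 : w (n + 1) = 1
        · rw [hw1, one_pow]
        · exact (norm_pow_key _ hw1 (hk1 n)).1
      have h2 : ((w (n + 1)) ^ (k (n + 1))).norm ≤ ((v n)⁻¹).norm + (w n).norm := by
        rw [hpow n]
        exact FreeGroup.norm_mul_le _ _
      have h3 : S (n + 1) = S n + ((v n).norm + ((v n)⁻¹).norm) := by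
        rw [hS]
        simp [Finset.sum_range_succ]
      omega
  -- lower bound when nontrivial
  have claim2 : ∀ n, w (n + 1) ≠ 1 → n + 2 ≤ (w 0).norm := by
    intro n hw1
    have h1 : k (n + 1) ≤ ((w (n + 1)) ^ (k (n + 1))).norm :=
      (norm_pow_key _ hw1 (hk1 n)).2
    have h2 : ((w (n + 1)) ^ (k (n + 1))).norm ≤ ((v n)⁻¹).norm + (w n).norm := by
      rw [hpow n]
      exact FreeGroup.norm_mul_le _ _
    have h3 := claim1 n
    have h4 := hk n
    have h5 : S (n + 1) = S n + ((v n).norm + ((v n)⁻¹).norm) := by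
      rw [hS]
      simp [Finset.sum_range_succ]
    have h6 : (Finset.range (n + 1)).sum
        (fun j => (v j).norm + ((v j)⁻¹).norm) = S (n + 1) := rfl
    omega
  -- nontriviality cannot fail twice in a row
  have claim3 : ∀ n, w n = 1 → w (n + 1) ≠ 1 := by
    intro n h1 h2
    have := hrel n
    rw [h1, h2, one_pow, mul_one] at this
    exact hv n this.symm
  set m := (w 0).norm with hm
  by_cases hw : w (m + 1) = 1
  · exact absurd (claim2 (m + 1) (claim3 _ hw)) (by omega)
  · exact absurd (claim2 m hw) (by omega)

end FGAux

namespace Constr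

open FGAux

variable {G : Type*} [Group G]

/-- nested partial products: `D z k d n = z n * (z (n+1) * (... )^(k (n+2)))^(k (n+1))`
with `d` letters `z n, ..., z (n+d-1)`. -/
def D (z : ℕ → G) (k : ℕ → ℕ) : ℕ → ℕ → G
  | 0, _ => 1
  | (d+1), n => z n * (D z k d (n+1)) ^ (k (n+1))

/-- same but with the innermost letter replaced by a parameter `t` -/
def E (z : ℕ → G) (k : ℕ → ℕ) : ℕ → ℕ → G → G
  | 0, _, t => t
  | (d+1), n, t => z n * (E z k d (n+1) t) ^ (k (n+1))

lemma D_succ (z : ℕ → G) (k : ℕ → ℕ) (d n : ℕ) :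
    D z k (d+1) n = z n * (D z k d (n+1)) ^ (k (n+1)) := rfl

lemma E_eq_D (z : ℕ → G) (k : ℕ → ℕ) (d n : ℕ) :
    E z k d n (z (n+d)) = D z k (d+1) n := by
  induction d generalizing n with
  | zero => simp [D, E]
  | succ d ih =>
    show z n * (E z k d (n+1) (z (n+d+1))) ^ (k (n+1)) = D z k (d+2) n
    have : n + 1 + d = n + d + 1 := by omega
    rw [show z (n+d+1) = z ((n+1)+d) by rw [this], ih (n+1)]
    rfl

lemma E_eq_D' (z : ℕ → G) (k : ℕ → ℕ) (d n : ℕ) :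
    E z k d n (z (n+d) * (z (n+d+1)) ^ (k (n+d+1))) = D z k (d+2) n := by
  induction d generalizing n with
  | zero => simp [D, E]
  | succ d ih =>
    show z n * (E z k d (n+1) (z (n+d+1) * (z (n+d+2)) ^ (k (n+d+2)))) ^ (k (n+1))
        = D z k (d+3) n
    have h1 : n + d + 1 = (n+1) + d := by omega
    have h2 : n + d + 2 = (n+1) + d + 1 := by omega
    rw [h1, h2, ih (n+1)]
    rfl

lemma E_cont [MetricSpace G] [IsTopologicalGroup G] (z : ℕ → G) (k : ℕ → ℕ) (d n : ℕ) :
    Continuous (E z k d n) := by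
  induction d generalizing n with
  | zero => exact continuous_id
  | succ d ih =>
    show Continuous (fun t => z n * (E z k d (n+1) t) ^ (k (n+1)))
    exact continuous_const.mul ((ih (n+1)).pow _)

lemma E_congr {z z' : ℕ → G} {k k' : ℕ → ℕ} (d n : ℕ)
    (hz : ∀ i, n ≤ i → i < n + d → z i = z' i)
    (hk : ∀ i, n + 1 ≤ i → i ≤ n + d → k i = k' i) (t : G) :
    E z k d n t = E z' k' d n t := by
  induction d generalizing n with
  | zero => rfl
  | succ d ih =>
    show z n * (E z k d (n+1) t) ^ (k (n+1)) = z' n * (E z' k' d (n+1) t) ^ (k' (n+1))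
    rw [hz n (le_refl n) (by omega), hk (n+1) (by omega) (by omega),
      ih (n+1) (fun i h1 h2 => hz i (by omega) (by omega))
        (fun i h1 h2 => hk i (by omega) (by omega))]

end Constr

namespace Constr

open FGAux

variable {G : Type*} [Group G] {β : Type*} [DecidableEq β]

/-- the exponents, computed from the images of the letters -/
def kfun (φ : G →* FreeGroup β) (z : ℕ → G) : ℕ → ℕ
  | 0 => 1
  | (m+1) => m + 2 + (Finset.range (m+1)).sum
      (fun j => (φ (z j)).norm + ((φ (z j))⁻¹).norm)

lemma kfun_congr (φ : G →* FreeGroup β) {z z' : ℕ → G} (m : ℕ)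
    (h : ∀ i < m, z i = z' i) : kfun φ z m = kfun φ z' m := by
  cases m with
  | zero => rfl
  | succ m =>
    show m + 2 + _ = m + 2 + _
    congr 1
    apply Finset.sum_congr rfl
    intro j hj
    rw [h j (Finset.mem_range.1 hj)]

lemma kfun_pos (φ : G →* FreeGroup β) (z : ℕ → G) (m : ℕ) : 1 ≤ kfun φ z m := by
  cases m with
  | zero => exact le_refl 1
  | succ m => show 1 ≤ m + 2 + _ ; omega

/-- finitely many continuous functions are simultaneously close to their value at 1 -/
lemma finite_cont_bound [MetricSpace G] (m : ℕ) (f : ℕ → G → G)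
    (hf : ∀ n < m, Continuous (f n)) (ε : ℝ) (hε : 0 < ε) :
    ∃ δ > 0, ∀ t : G, dist t 1 < δ → ∀ n < m, dist (f n t) (f n 1) < ε := by
  induction m with
  | zero => exact ⟨1, by norm_num, fun t _ n hn => absurd hn (by omega)⟩
  | succ m ih =>
    obtain ⟨δ, hδ, hδ'⟩ := ih (fun n hn => hf n (by omega))
    have hc : ContinuousAt (f m) 1 := (hf m (by omega)).continuousAt
    rw [Metric.continuousAt_iff] at hc
    obtain ⟨δ', hδ'0, hδ''⟩ := hc ε hε
    refine ⟨min δ δ', by positivity, fun t ht n hn => ?_⟩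
    rcases Nat.lt_or_ge n m with h | h
    · exact hδ' t (lt_of_lt_of_le ht (min_le_left _ _)) n h
    · have : n = m := by omega
      subst this
      exact hδ'' (lt_of_lt_of_le ht (min_le_right _ _))

end Constr

namespace Constr

open FGAux

variable {G : Type*} [Group G] [MetricSpace G] [IsTopologicalGroup G]
  {β : Type*} [DecidableEq β]

def lz (l : List G) : ℕ → G := fun i => l.getD i 1

def GoodAt (φ : G →* FreeGroup β) (z : ℕ → G) (m : ℕ) : Prop :=
  φ (z m) ≠ 1 ∧ dist (z m) 1 ≤ (1/2 : ℝ)^m ∧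
  ∀ n < m, dist (E z (kfun φ z) (m-1-n) n (z (m-1)))
    (E z (kfun φ z) (m-1-n) n (z (m-1) * (z m) ^ (kfun φ z m))) ≤ (1/2 : ℝ)^m

lemma GoodAt_congr (φ : G →* FreeGroup β) {z z' : ℕ → G} (m : ℕ)
    (h : ∀ i ≤ m, z i = z' i) : GoodAt φ z m → GoodAt φ z' m := by
  intro ⟨h1, h2, h3⟩
  have hkc : ∀ i ≤ m, kfun φ z i = kfun φ z' i := fun i hi =>
    kfun_congr φ i (fun j hj => h j (by omega))
  refine ⟨by rw [← h m (le_refl m)]; exact h1, by rw [← h m (le_refl m)]; exact h2, ?_⟩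
  intro n hn
  have hE : ∀ t, E z (kfun φ z) (m-1-n) n t = E z' (kfun φ z') (m-1-n) n t := by
    intro t
    exact E_congr _ _ (fun i hi1 hi2 => h i (by omega)) (fun i hi1 hi2 => hkc i (by omega)) t
  rw [← hE, ← hE, ← h (m-1) (by omega), ← h m (le_refl m), ← hkc m (le_refl m)]
  exact h3 n hn

def Good (φ : G →* FreeGroup β) (l : List G) : Prop :=
  ∀ m, m < l.length → GoodAt φ (lz l) m

lemma lz_append_lt (l l' : List G) (i : ℕ) (h : i < l.length) :
    lz (l ++ l') i = lz l i := by
  simp only [lz, List.getD_eq_getElem?_getD, List.getElem?_append_left h]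

lemma lz_append_last (l : List G) (g : G) : lz (l ++ [g]) l.length = g := by
  simp [lz, List.getD_eq_getElem?_getD]

lemma good_extend (φ : G →* FreeGroup β)
    (hz : ∀ δ : ℝ, 0 < δ → ∃ u : G, dist u 1 < δ ∧ φ u ≠ 1)
    (l : List G) (hl : Good φ l) : ∃ g, Good φ (l ++ [g]) := by
  set m := l.length with hm
  set Z := lz l with hZ
  set K := kfun φ Z with hK
  -- the finitely many continuous test functions
  set f : ℕ → G → G := fun n t => E Z K (m-1-n) n (Z (m-1) * t ^ (K m)) with hf
  have hfc : ∀ n < m, Continuous (f n) := by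
    intro n _
    exact (E_cont Z K (m-1-n) n).comp (continuous_const.mul (continuous_pow (K m)))
  have hpos : (0:ℝ) < (1/2)^m := by positivity
  obtain ⟨δ, hδ0, hδ⟩ := finite_cont_bound m f hfc ((1/2)^m) hpos
  obtain ⟨g, hg1, hg2⟩ := hz (min δ ((1/2)^m)) (by positivity)
  refine ⟨g, ?_⟩
  intro m' hm'
  rw [List.length_append, List.length_singleton] at hm'
  have hagree : ∀ i ≤ m', i < m → lz (l ++ [g]) i = Z i := fun i _ hi =>
    lz_append_lt l [g] i hi
  rcases Nat.lt_or_ge m' m with hlt | hge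
  · -- old indices : use congruence
    exact GoodAt_congr φ m' (fun i hi => (lz_append_lt l [g] i (by omega)).symm)
      (hl m' hlt)
  · -- the new index m' = m
    have hm'm : m' = m := by omega
    subst hm'm
    have hlast : lz (l ++ [g]) m = g := lz_append_last l g
    have hzc : ∀ i ≤ m, i < m → lz (l ++ [g]) i = Z i := fun i _ hi =>
      lz_append_lt l [g] i hi
    have hkc : ∀ i ≤ m, kfun φ (lz (l ++ [g])) i = K i := by
      intro i hi
      rw [hK]
      exact kfun_congr φ i (fun j hj => lz_append_lt l [g] j (by omega))
    refine ⟨by rw [hlast]; exact hg2, by rw [hlast]; exact le_trans (le_of_lt hg1) (min_le_right _ _), ?_⟩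
    intro n hn
    have hEc : ∀ t, E (lz (l ++ [g])) (kfun φ (lz (l ++ [g]))) (m-1-n) n t
        = E Z K (m-1-n) n t := by
      intro t
      exact E_congr _ _ (fun i hi1 hi2 => lz_append_lt l [g] i (by omega))
        (fun i hi1 hi2 => hkc i (by omega)) t
    rw [hEc, hEc, hlast, hkc m (le_refl m),
      lz_append_lt l [g] (m-1) (by omega)]
    have h1 : f n 1 = E Z K (m-1-n) n (Z (m-1)) := by
      rw [hf]
      simp
    have h2 : f n g = E Z K (m-1-n) n (Z (m-1) * g ^ (K m)) := rfl
    rw [← h1, ← h2]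
    rw [dist_comm]
    exact le_of_lt (hδ g (lt_of_lt_of_le hg1 (min_le_left _ _)) n hn)

end Constr

namespace Constr

open FGAux Filter Topology

lemma main_contradiction {G : Type*} [Group G] [MetricSpace G] [CompleteSpace G]
    [IsTopologicalGroup G] {β : Type*} [DecidableEq β] (φ : G →* FreeGroup β)
    (hz : ∀ δ : ℝ, 0 < δ → ∃ u : G, dist u 1 < δ ∧ φ u ≠ 1) : False := by
  -- construct the sequence of letters recursively
  have hGoodNil : Good φ ([] : List G) := fun m hm => absurd hm (by simp)
  let st : ℕ → {l : List G // Good φ l} := fun n => Nat.rec ⟨[], hGoodNil⟩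
    (fun _ p => ⟨p.1 ++ [Classical.choose (good_extend φ hz p.1 p.2)],
      Classical.choose_spec (good_extend φ hz p.1 p.2)⟩) n
  have hst_succ : ∀ n, ∃ g, (st (n+1)).1 = (st n).1 ++ [g] := fun n =>
    ⟨Classical.choose (good_extend φ hz (st n).1 (st n).2), rfl⟩
  have hlen : ∀ n, (st n).1.length = n := by
    intro n
    induction n with
    | zero => rfl
    | succ n ih =>
      obtain ⟨g, hg⟩ := hst_succ n
      rw [hg, List.length_append, List.length_singleton, ih]
  have hpref : ∀ n m, n ≤ m → (st n).1 <+: (st m).1 := by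
    intro n m hnm
    induction m with
    | zero =>
      have : n = 0 := by omega
      subst this
      exact List.prefix_refl _
    | succ m ih =>
      rcases Nat.lt_or_ge n (m+1) with h | h
      · obtain ⟨g, hg⟩ := hst_succ m
        exact (ih (by omega)).trans (by rw [hg]; exact List.prefix_append _ _)
      · have : n = m + 1 := by omega
        subst this
        exact List.prefix_refl _
  -- the global sequence
  set z : ℕ → G := fun i => lz (st (i+1)).1 i with hzdef
  have hagree : ∀ i n, i < n → lz (st n).1 i = z i := by
    intro i n hin
    obtain ⟨r, hr⟩ := hpref (i+1) n (by omega)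
    rw [hzdef]
    simp only
    rw [← hr, lz_append_lt]
    have := hlen (i+1)
    omega
  have hgood : ∀ m, GoodAt φ z m := by
    intro m
    have h1 := (st (m+1)).2 m (by have := hlen (m+1); omega)
    exact GoodAt_congr φ m (fun i hi => hagree i (m+1) (by omega)) h1
  set k : ℕ → ℕ := kfun φ z with hkdef
  -- Cauchy sequences of nested products
  have hcauchy : ∀ n, CauchySeq (fun d => D z k d n) := by
    intro n
    apply cauchySeq_of_le_geometric (1/2 : ℝ) ((1/2)^n) (by norm_num)
    intro d
    rcases Nat.eq_zero_or_pos d with rfl | hd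
    · -- first step
      have : D z k 0 n = 1 := rfl
      rw [this, D_succ]
      have h0 : D z k 0 (n+1) = 1 := rfl
      rw [h0, one_pow, mul_one, dist_comm, pow_zero, mul_one]
      exact (hgood n).2.1
    · obtain ⟨e, rfl⟩ : ∃ e, d = e + 1 := ⟨d - 1, by omega⟩
      set m := n + e + 1 with hm
      have h3 := (hgood m).2.2 n (by omega)
      have he1 : m - 1 - n = e := by omega
      have he2 : m - 1 = n + e := by omega
      rw [he1, he2] at h3
      rw [E_eq_D] at h3
      have he3 : n + e + 1 = m := by omega
      rw [show z (n+e) * z m ^ k m = z (n+e) * z (n+e+1) ^ k (n+e+1) by rw [he3]] at h3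
      rw [E_eq_D'] at h3
      calc dist (D z k (e+1) n) (D z k (e+2) n) ≤ (1/2 : ℝ)^m := h3
        _ = (1/2)^n * (1/2)^(e+1) := by rw [hm, pow_add, pow_add]; ring
  have hy : ∀ n, ∃ y : G, Tendsto (fun d => D z k d n) atTop (𝓝 y) := fun n =>
    cauchySeq_tendsto_of_complete (hcauchy n)
  set y : ℕ → G := fun n => Classical.choose (hy n) with hydef
  have hyt : ∀ n, Tendsto (fun d => D z k d n) atTop (𝓝 (y n)) := fun n =>
    Classical.choose_spec (hy n)
  -- the limit relations
  have hrel : ∀ n, y n = z n * (y (n+1)) ^ (k (n+1)) := by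
    intro n
    have t1 : Tendsto (fun d => D z k (d+1) n) atTop (𝓝 (y n)) :=
      (hyt n).comp (tendsto_add_atTop_nat 1)
    have t2 : Tendsto (fun d => z n * (D z k d (n+1)) ^ (k (n+1))) atTop
        (𝓝 (z n * (y (n+1)) ^ (k (n+1)))) :=
      (((hyt (n+1)).pow (k (n+1))).const_mul (z n))
    have : (fun d => D z k (d+1) n) = (fun d => z n * (D z k d (n+1)) ^ (k (n+1))) := rfl
    rw [this] at t1
    exact tendsto_nhds_unique t1 t2
  -- transfer to the free group and contradict
  exact no_nested_powers (fun n => φ (z n)) (fun n => φ (y n)) k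
    (fun n => (hgood n).1)
    (fun n => by
      show φ (y n) = φ (z n) * (φ (y (n+1))) ^ (k (n+1))
      rw [hrel n, map_mul, map_pow])
    (fun n => le_of_eq rfl)

end Constr

namespace FinalAsm

open FGAux Constr Topology Set

lemma not_countable_cantor : ¬ Countable (ℕ → Bool) := by
  intro h
  have : Countable (Set ℕ) :=
    Countable.of_equiv _ (Equiv.arrowCongr (Equiv.refl ℕ) Equiv.propEquivBool).symm
  obtain ⟨f, hf⟩ := exists_injective_nat (Set ℕ)
  exact Function.cantor_injective f hf

/-- In a nondiscrete complete metric space which is a topological group,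
there is a countable set with uncountable closure. -/
lemma exists_countable_closure_uncountable
    (G : Type*) [Group G] [MetricSpace G] [CompleteSpace G] [IsTopologicalGroup G]
    (hnodisc : ∀ (x : G) (ε : ℝ), 0 < ε → ∃ y, dist y x < ε ∧ y ≠ x) :
    ∃ A : Set G, A.Countable ∧ ¬ (closure A).Countable := by
  have hperf : Perfect (Set.univ : Set G) := by
    constructor
    · exact isClosed_univ
    · intro x _
      rw [accPt_iff_nhds]
      intro U hU
      obtain ⟨ε, hε, hball⟩ := Metric.mem_nhds_iff.1 hU
      obtain ⟨y, hy1, hy2⟩ := hnodisc x ε hε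
      exact ⟨y, ⟨hball hy1, trivial⟩, hy2⟩
  obtain ⟨f, -, hfc, hfi⟩ := hperf.exists_nat_bool_injection ⟨1, trivial⟩
  obtain ⟨s₀, hs₀c, hs₀d⟩ := TopologicalSpace.exists_countable_dense (ℕ → Bool)
  refine ⟨f '' s₀, hs₀c.image f, ?_⟩
  intro hcl
  have hsub : Set.range f ⊆ closure (f '' s₀) := by
    have h1 : Set.range f = f '' Set.univ := (Set.image_univ).symm
    rw [h1, ← hs₀d.closure_eq]
    exact image_closure_subset_closure_image hfc
  have hrange : (Set.range f).Countable := hcl.mono hsub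
  have huniv : (Set.univ : Set (ℕ → Bool)).Countable := by
    have := (hrange.preimage hfi)
    rwa [Set.preimage_range] at this
  exact not_countable_cantor (Set.countable_univ_iff.1 huniv)

end FinalAsm

/-- If `(G,d)` is a complete metric group of density strictly less than `|G|` which is
`ℵ₁`-free (every countable subgroup is free), then there is a countable subset `A ⊆ G`
such that no countable subgroup of `G` containing `A` is a retract of `G`. -/
theorem complete_metric_group_no_countable_retract
    (G : Type*) [Group G] [MetricSpace G] [CompleteSpace G] [IsTopologicalGroup G]
    (hdensity : ∃ s : Set G, Dense s ∧ Cardinal.mk s < Cardinal.mk G)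
    (haleph1free : ∀ H : Subgroup G, Countable H → IsFreeGroup H) :
    ∃ A : Set G, A.Countable ∧
      ∀ H : Subgroup G, Countable H → A ⊆ (H : Set G) →
        ¬ ∃ h : G →* G, (∀ x : G, h x ∈ H) ∧ (∀ x ∈ H, h x = x) := by
  classical
  obtain ⟨s, hsd, hscard⟩ := hdensity
  -- G has no isolated points
  have hnodisc : ∀ (x : G) (ε : ℝ), 0 < ε → ∃ y, dist y x < ε ∧ y ≠ x := by
    by_contra hcon
    push_neg at hcon
    obtain ⟨x, ε, hε, hx⟩ := hcon
    have hopen : IsOpen ({x} : Set G) := by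
      rw [Metric.isOpen_singleton_iff]
      exact ⟨ε, hε, hx⟩
    -- all singletons are open, so the topology is discrete
    have hall : ∀ g : G, IsOpen ({g} : Set G) := by
      intro g
      have := (Homeomorph.mulLeft (g * x⁻¹)).isOpen_image.2 hopen
      have himg : (Homeomorph.mulLeft (g * x⁻¹)) '' {x} = {g} := by
        rw [Set.image_singleton]
        simp [Homeomorph.mulLeft]
      rwa [himg] at this
    have : DiscreteTopology G := discreteTopology_iff_isOpen_singleton.2 hall
    have hsuniv : s = Set.univ := by
      have := hsd.closure_eq
      rw [(isClosed_discrete s).closure_eq] at this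
      exact this
    rw [hsuniv, Cardinal.mk_univ] at hscard
    exact lt_irrefl _ hscard
  obtain ⟨A, hAc, hAuc⟩ :=
    FinalAsm.exists_countable_closure_uncountable G hnodisc
  refine ⟨A, hAc, ?_⟩
  rintro H hHc hAH ⟨h, hmem, hfix⟩
  haveI : IsFreeGroup ↥H := haleph1free H hHc
  letI : DecidableEq (IsFreeGroup.Generators ↥H) := Classical.decEq _
  set e := IsFreeGroup.toFreeGroup ↥H with he
  set φ : G →* FreeGroup (IsFreeGroup.Generators ↥H) :=
    e.toMonoidHom.comp (h.codRestrict H hmem) with hφ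
  -- a point in the closure of A outside H
  have hnotsub : ¬ (closure A ⊆ (H : Set G)) := by
    intro hsub
    exact hAuc ((Set.countable_coe_iff.1 hHc).mono hsub)
  obtain ⟨x, hxcl, hxH⟩ := Set.not_subset.1 hnotsub
  have hxhx : h x ≠ x := fun hcon => hxH (hcon ▸ hmem x)
  -- elements near 1 with nontrivial image
  have hz : ∀ δ : ℝ, 0 < δ → ∃ u : G, dist u 1 < δ ∧ φ u ≠ 1 := by
    intro δ hδ
    have hcont : ContinuousAt (fun t : G => t⁻¹ * x) x :=
      (continuous_inv.mul continuous_const).continuousAt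
    rw [Metric.continuousAt_iff] at hcont
    obtain ⟨ε, hε, hball⟩ := hcont δ hδ
    have hd0 : 0 < dist x (h x) := dist_pos.2 (fun hcc => hxhx hcc.symm)
    obtain ⟨a, haA, hax⟩ := Metric.mem_closure_iff.1 hxcl (min ε (dist x (h x)))
      (lt_min hε hd0)
    have haH : a ∈ H := hAH haA
    refine ⟨a⁻¹ * x, ?_, ?_⟩
    · have hda : dist a x < ε := by
        rw [dist_comm]
        exact lt_of_lt_of_le hax (min_le_left _ _)
      have := hball hda
      rwa [inv_mul_cancel] at this
    · -- φ (a⁻¹ * x) ≠ 1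
      intro hone
      have h1 : h (a⁻¹ * x) = 1 := by
        have h2 : (h.codRestrict H hmem) (a⁻¹ * x) = 1 := by
          apply e.injective
          rw [map_one]
          exact hone
        have := congrArg (Subtype.val) h2
        exact this
      have h3 : h (a⁻¹ * x) = a⁻¹ * h x := by
        rw [map_mul, map_inv, hfix a haH]
      rw [h3] at h1
      have hhxa : h x = a := by
        have := congrArg (fun t => a * t) h1
        simpa using this
      have hlt : dist x a < dist x (h x) := lt_of_lt_of_le hax (min_le_right _ _)
      rw [hhxa] at hlt
      exact lt_irrefl _ hlt
  exact Constr.main_contradiction φ hz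
end

section
/- Let M be a countably infinite first-order structure (in an arbitrary language). If the automorphism group Aut(M) of M is a free group, then Aut(M) is countable; in particular, the automorphism group of a countable structure is never an uncountable free group. -/
open FirstOrder

/-- The automorphism group of a first-order structure, with composition as multiplication. -/
instance Language.autGroup (L : Language) (M : Type*) [L.Structure M] :
    Group (M ≃[L] M) where
  mul f g := f.comp g
  one := Language.Equiv.refl L M
  inv := Language.Equiv.symm
  mul_assoc a b c := (Language.Equiv.comp_assoc c b a).symm
  one_mul := Language.Equiv.refl_comp
  mul_one := Language.Equiv.comp_refl
  inv_mul_cancel f := by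
    ext x
    exact f.symm_apply_apply x

section DudleyAux

variable {L : Language} {M : Type*} [L.Structure M]

lemma AutAux.mul_apply (f g : M ≃[L] M) (a : M) : (f * g) a = f (g a) := rfl

lemma AutAux.inv_apply (f : M ≃[L] M) (a : M) : (f⁻¹) a = f.symm a := rfl

lemma AutAux.pow3_apply (g : M ≃[L] M) (a : M) : (g ^ 3) a = g (g (g a)) := by
  have h3 : g ^ 3 = g * (g * g) := by
    rw [pow_succ, pow_succ, pow_one, mul_assoc]
  rw [h3, AutAux.mul_apply, AutAux.mul_apply]

lemma AutAux.fix_inv {g : M ≃[L] M} {a : M} (h : g a = a) : (g⁻¹) a = a := by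
  rw [AutAux.inv_apply]
  conv_lhs => rw [← h]
  exact g.symm_apply_apply a

lemma AutAux.fix_pow {g : M ≃[L] M} {a : M} (h : g a = a) (n : ℕ) : (g ^ n) a = a := by
  induction n with
  | zero => rfl
  | succ n ih => rw [pow_succ, AutAux.mul_apply, h, ih]

end DudleyAux

section Dudley

variable {L : Language} {M : Type*} [L.Structure M]

open AutAux

/-- apply all elements of `l` (and their inverses) to all points of `s` -/
noncomputable def appsD : List (M ≃[L] M) → List M → List M
  | [], _ => []
  | g :: t, s => s.map ⇑g ++ s.map ⇑g.symm ++ appsD t s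

noncomputable def stepD (l : List (M ≃[L] M)) (s : List M) : List M := s ++ appsD l s

noncomputable def protectD (nth : ℕ → M) (l : List (M ≃[L] M)) : List M :=
  (stepD l)^[4 ^ (l.length + 2)] ((List.range (l.length + 1)).map nth)

lemma appsD_mem {l : List (M ≃[L] M)} {s : List M} {g : M ≃[L] M} (hg : g ∈ l) {a : M}
    (ha : a ∈ s) : g a ∈ appsD l s ∧ g.symm a ∈ appsD l s := by
  induction l with
  | nil => cases hg
  | cons h t ih =>
    rcases List.mem_cons.1 hg with rfl | hg'
    · constructor
      · exact List.mem_append_left _ (List.mem_append_left _ (List.mem_map_of_mem ha))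
      · exact List.mem_append_left _ (List.mem_append_right _ (List.mem_map_of_mem ha))
    · obtain ⟨h1, h2⟩ := ih hg'
      exact ⟨List.mem_append_right _ h1, List.mem_append_right _ h2⟩

lemma stepD_mem_self {l : List (M ≃[L] M)} {s : List M} {a : M} (ha : a ∈ s) :
    a ∈ stepD l s := List.mem_append_left _ ha

lemma stepD_mem_app {l : List (M ≃[L] M)} {s : List M} {g : M ≃[L] M} (hg : g ∈ l) {a : M}
    (ha : a ∈ s) : g a ∈ stepD l s ∧ g.symm a ∈ stepD l s :=
  ⟨List.mem_append_right _ (appsD_mem hg ha).1, List.mem_append_right _ (appsD_mem hg ha).2⟩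

end Dudley

section Dudley2

variable {L : Language} {M : Type*} [L.Structure M]
variable (φ : (M ≃[L] M) →* Multiplicative ℤ) (nth : ℕ → M)
variable (hdeep : ∀ F : List M, ∃ u : M ≃[L] M,
    (∀ a ∈ F, u a = a) ∧ φ u = Multiplicative.ofAdd (-1 : ℤ))

open AutAux

noncomputable def pickD (l : List (M ≃[L] M)) : M ≃[L] M :=
  (hdeep (protectD nth l)).choose

lemma pickD_fix (l : List (M ≃[L] M)) : ∀ a ∈ protectD nth l, pickD φ nth hdeep l a = a :=
  (hdeep (protectD nth l)).choose_spec.1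

lemma pickD_val (l : List (M ≃[L] M)) :
    φ (pickD φ nth hdeep l) = Multiplicative.ofAdd (-1 : ℤ) :=
  (hdeep (protectD nth l)).choose_spec.2

noncomputable def histD : ℕ → List (M ≃[L] M)
  | 0 => []
  | k + 1 => histD k ++ [pickD φ nth hdeep (histD k)]

noncomputable def uD (k : ℕ) : M ≃[L] M := pickD φ nth hdeep (histD φ nth hdeep k)

lemma histD_length (k : ℕ) : (histD φ nth hdeep k).length = k := by
  induction k with
  | zero => rfl
  | succ k ih => simp [histD, ih]

lemma histD_mono {k : ℕ} {g : M ≃[L] M} (hg : g ∈ histD φ nth hdeep k) :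
    g ∈ histD φ nth hdeep (k + 1) := List.mem_append_left _ hg

lemma uD_mem_histD {j k : ℕ} (h : j < k) : uD φ nth hdeep j ∈ histD φ nth hdeep k := by
  induction k with
  | zero => omega
  | succ k ih =>
    rcases Nat.lt_succ_iff_lt_or_eq.1 h with h' | rfl
    · exact histD_mono φ nth hdeep (ih h')
    · exact List.mem_append_right _ (List.mem_singleton.2 rfl)

/-- the word `y_m` at stage `m + f`:  `go f m = u_m * (go (f-1) (m+1))^3`. -/
noncomputable def goD : ℕ → ℕ → (M ≃[L] M)
  | 0, m => uD φ nth hdeep m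
  | f + 1, m => uD φ nth hdeep m * (goD f (m + 1)) ^ 3

/-- saturated finite sets of points at stage `k` -/
noncomputable def satD (k j : ℕ) : List M :=
  (stepD (histD φ nth hdeep k))^[j] ((List.range (k + 1)).map nth)

lemma satD_succ (k j : ℕ) :
    satD φ nth hdeep k (j + 1) = stepD (histD φ nth hdeep k) (satD φ nth hdeep k j) :=
  Function.iterate_succ_apply' _ _ _

lemma satD_mono {k j j' : ℕ} (h : j ≤ j') {a : M} (ha : a ∈ satD φ nth hdeep k j) :
    a ∈ satD φ nth hdeep k j' := by
  induction j' with
  | zero => exact (Nat.le_zero.1 h) ▸ ha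
  | succ j' ih =>
    rcases Nat.le_succ_iff.1 h with h' | rfl
    · rw [satD_succ]; exact stepD_mem_self (ih h')
    · exact ha

lemma satD_app {k j : ℕ} {g : M ≃[L] M} (hg : g ∈ histD φ nth hdeep k) {a : M}
    (ha : a ∈ satD φ nth hdeep k j) :
    g a ∈ satD φ nth hdeep k (j + 1) ∧ g.symm a ∈ satD φ nth hdeep k (j + 1) := by
  rw [satD_succ]; exact stepD_mem_app hg ha

lemma satD_base {k i : ℕ} (h : i ≤ k) : nth i ∈ satD φ nth hdeep k 0 := by
  exact List.mem_map_of_mem (List.mem_range.2 (by omega))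

lemma uD_fix {k j : ℕ} (hj : j ≤ 4 ^ (k + 2)) {a : M} (ha : a ∈ satD φ nth hdeep k j) :
    uD φ nth hdeep k a = a := by
  apply pickD_fix φ nth hdeep (histD φ nth hdeep k)
  have : protectD nth (histD φ nth hdeep k) = satD φ nth hdeep k (4 ^ (k + 2)) := by
    unfold protectD satD
    rw [histD_length]
  rw [this]
  exact satD_mono φ nth hdeep hj ha

end Dudley2

section Dudley3

variable {L : Language} {M : Type*} [L.Structure M]
variable (φ : (M ≃[L] M) →* Multiplicative ℤ) (nth : ℕ → M)
variable (hdeep : ∀ F : List M, ∃ u : M ≃[L] M,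
    (∀ a ∈ F, u a = a) ∧ φ u = Multiplicative.ofAdd (-1 : ℤ))

open AutAux

lemma goD_zero (m : ℕ) : goD φ nth hdeep 0 m = uD φ nth hdeep m := rfl

lemma goD_succ (f m : ℕ) :
    goD φ nth hdeep (f + 1) m
      = uD φ nth hdeep m * (goD φ nth hdeep f (m + 1)) ^ 3 := rfl

lemma claimD (k : ℕ) : ∀ f m, m + f = k → ∀ j a, a ∈ satD φ nth hdeep (k + 1) j →
    j + 4 ^ (f + 1) ≤ 4 ^ (k + 3) →
    ((goD φ nth hdeep (f + 1) m) a = (goD φ nth hdeep f m) a ∧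
      (goD φ nth hdeep f m) a ∈ satD φ nth hdeep (k + 1) (j + 4 ^ (f + 1))) ∧
    ((goD φ nth hdeep (f + 1) m)⁻¹ a = (goD φ nth hdeep f m)⁻¹ a ∧
      (goD φ nth hdeep f m)⁻¹ a ∈ satD φ nth hdeep (k + 1) (j + 4 ^ (f + 1))) := by
  intro f
  induction f with
  | zero =>
    intro m hm j a ha hj
    have hmk : m = k := by omega
    subst hmk
    have hatom1 : (4:ℕ) ^ (0 + 1) = 4 := by norm_num
    have hatom2 : (4:ℕ) ^ (m + 1 + 2) = 4 ^ (m + 3) := rfl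
    -- the new letter is `uD (m+1)` and it fixes all the relevant points
    have hfixa : uD φ nth hdeep (m + 1) a = a :=
      uD_fix φ nth hdeep (by omega : j ≤ 4 ^ ((m + 1) + 2)) ha
    have humem : uD φ nth hdeep m ∈ histD φ nth hdeep (m + 1) :=
      uD_mem_histD φ nth hdeep (Nat.lt_succ_self m)
    have happ := satD_app φ nth hdeep humem ha
    constructor
    · constructor
      · rw [goD_succ, goD_zero, goD_zero, mul_apply, fix_pow hfixa]
      · rw [goD_zero]
        exact satD_mono φ nth hdeep (by omega) happ.1
    · have hb : (uD φ nth hdeep m)⁻¹ a ∈ satD φ nth hdeep (m + 1) (j + 1) := by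
        rw [inv_apply]; exact happ.2
      have hfixb : uD φ nth hdeep (m + 1) ((uD φ nth hdeep m)⁻¹ a) = (uD φ nth hdeep m)⁻¹ a :=
        uD_fix φ nth hdeep (by omega : j + 1 ≤ 4 ^ ((m + 1) + 2)) hb
      constructor
      · rw [goD_succ, goD_zero, goD_zero, mul_inv_rev, mul_apply, ← inv_pow,
          fix_pow (fix_inv hfixb)]
      · rw [goD_zero]
        exact satD_mono φ nth hdeep (by omega) hb
  | succ f ih =>
    intro m hm j a ha hj
    have hpow : (4:ℕ) ^ (f + 1 + 1) = 4 * 4 ^ (f + 1) := by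
      rw [pow_succ]; ring
    have hLf1 : (1 : ℕ) ≤ 4 ^ (f + 1) := Nat.one_le_pow _ _ (by norm_num)
    have gsucc2 : goD φ nth hdeep (f + 1 + 1) m
        = uD φ nth hdeep m * (goD φ nth hdeep (f + 1) (m + 1)) ^ 3 := rfl
    have gsucc1 : goD φ nth hdeep (f + 1) m
        = uD φ nth hdeep m * (goD φ nth hdeep f (m + 1)) ^ 3 := rfl
    have humem : uD φ nth hdeep m ∈ histD φ nth hdeep (k + 1) :=
      uD_mem_histD φ nth hdeep (by omega)
    obtain ⟨⟨e1, m1⟩, e1', m1'⟩ := ih (m + 1) (by omega) j a ha (by omega)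
    obtain ⟨⟨e2, m2⟩, e2', m2'⟩ := ih (m + 1) (by omega) (j + 4 ^ (f + 1))
      ((goD φ nth hdeep f (m + 1)) a) m1 (by omega)
    obtain ⟨⟨e3, m3⟩, e3', m3'⟩ := ih (m + 1) (by omega)
      (j + 4 ^ (f + 1) + 4 ^ (f + 1)) ((goD φ nth hdeep f (m + 1)) ((goD φ nth hdeep f (m + 1)) a))
      m2 (by omega)
    constructor
    · have hchain : ((goD φ nth hdeep (f + 1) (m + 1)) ^ 3) a
          = (goD φ nth hdeep f (m + 1)) ((goD φ nth hdeep f (m + 1))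
              ((goD φ nth hdeep f (m + 1)) a)) := by
        rw [pow3_apply, e1, e2, e3]
      have hchain' : ((goD φ nth hdeep f (m + 1)) ^ 3) a
          = (goD φ nth hdeep f (m + 1)) ((goD φ nth hdeep f (m + 1))
              ((goD φ nth hdeep f (m + 1)) a)) := by
        rw [pow3_apply]
      constructor
      · rw [gsucc2, gsucc1, mul_apply, mul_apply, hchain, hchain']
      · rw [gsucc1, mul_apply, hchain']
        have := (satD_app φ nth hdeep humem m3).1
        exact satD_mono φ nth hdeep (by omega) this
    · -- inverses
      have hb : (uD φ nth hdeep m)⁻¹ a ∈ satD φ nth hdeep (k + 1) (j + 1) := by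
        rw [inv_apply]; exact (satD_app φ nth hdeep humem ha).2
      obtain ⟨⟨_, _⟩, f1', n1'⟩ := ih (m + 1) (by omega) (j + 1) ((uD φ nth hdeep m)⁻¹ a) hb
        (by omega)
      obtain ⟨⟨_, _⟩, f2', n2'⟩ := ih (m + 1) (by omega) (j + 1 + 4 ^ (f + 1))
        ((goD φ nth hdeep f (m + 1))⁻¹ ((uD φ nth hdeep m)⁻¹ a)) n1' (by omega)
      obtain ⟨⟨_, _⟩, f3', n3'⟩ := ih (m + 1) (by omega) (j + 1 + 4 ^ (f + 1) + 4 ^ (f + 1))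
        ((goD φ nth hdeep f (m + 1))⁻¹ ((goD φ nth hdeep f (m + 1))⁻¹ ((uD φ nth hdeep m)⁻¹ a)))
        n2' (by omega)
      have hchain : (((goD φ nth hdeep (f + 1) (m + 1)) ^ 3)⁻¹) ((uD φ nth hdeep m)⁻¹ a)
          = (goD φ nth hdeep f (m + 1))⁻¹ ((goD φ nth hdeep f (m + 1))⁻¹
              ((goD φ nth hdeep f (m + 1))⁻¹ ((uD φ nth hdeep m)⁻¹ a))) := by
        rw [← inv_pow, pow3_apply, f1', f2', f3']
      have hchain' : (((goD φ nth hdeep f (m + 1)) ^ 3)⁻¹) ((uD φ nth hdeep m)⁻¹ a)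
          = (goD φ nth hdeep f (m + 1))⁻¹ ((goD φ nth hdeep f (m + 1))⁻¹
              ((goD φ nth hdeep f (m + 1))⁻¹ ((uD φ nth hdeep m)⁻¹ a))) := by
        rw [← inv_pow, pow3_apply]
      constructor
      · rw [gsucc2, gsucc1, mul_inv_rev, mul_inv_rev, mul_apply, mul_apply, hchain, hchain']
      · rw [gsucc1, mul_inv_rev, mul_apply, hchain']
        exact satD_mono φ nth hdeep (by omega) n3'

end Dudley3

section Dudley4

variable {L : Language} {M : Type*} [L.Structure M]
variable (φ : (M ≃[L] M) →* Multiplicative ℤ) (nth : ℕ → M)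
variable (hdeep : ∀ F : List M, ∃ u : M ≃[L] M,
    (∀ a ∈ F, u a = a) ∧ φ u = Multiplicative.ofAdd (-1 : ℤ))
variable (hsurj : Function.Surjective nth)

open AutAux

lemma stabD {k m : ℕ} (hmk : m ≤ k) {i : ℕ} (hi : i ≤ k + 1) :
    (goD φ nth hdeep (k + 1 - m) m) (nth i) = (goD φ nth hdeep (k - m) m) (nth i) ∧
    (goD φ nth hdeep (k + 1 - m) m)⁻¹ (nth i) = (goD φ nth hdeep (k - m) m)⁻¹ (nth i) := by
  have hbase : nth i ∈ satD φ nth hdeep (k + 1) 0 := satD_base φ nth hdeep hi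
  have hpow : (4:ℕ) ^ (k - m + 1) ≤ 4 ^ (k + 3) :=
    Nat.pow_le_pow_right (by norm_num) (by omega)
  have h := claimD φ nth hdeep k (k - m) m (by omega) 0 (nth i) hbase (by omega)
  have hkm : k + 1 - m = (k - m) + 1 := by omega
  rw [hkm]
  exact ⟨h.1.1, h.2.1⟩

/-- stage from which the pointwise values stabilize -/
noncomputable def NND (m : ℕ) (a : M) : ℕ := max m ((hsurj a).choose)

lemma NND_le (m : ℕ) (a : M) : m ≤ NND nth hsurj m a := le_max_left _ _

lemma limD (m : ℕ) (a : M) : ∀ k, NND nth hsurj m a ≤ k →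
    (goD φ nth hdeep (k - m) m) a = (goD φ nth hdeep (NND nth hsurj m a - m) m) a ∧
    (goD φ nth hdeep (k - m) m)⁻¹ a = (goD φ nth hdeep (NND nth hsurj m a - m) m)⁻¹ a := by
  intro k hk
  induction k, hk using Nat.le_induction with
  | base => exact ⟨rfl, rfl⟩
  | succ k hk ih =>
    have hidx : nth ((hsurj a).choose) = a := (hsurj a).choose_spec
    have hs := stabD φ nth hdeep
      (le_trans (NND_le nth hsurj m a) hk : m ≤ k)
      (by have : (hsurj a).choose ≤ NND nth hsurj m a := le_max_right _ _; omega :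
        (hsurj a).choose ≤ k + 1)
    rw [hidx] at hs
    exact ⟨hs.1.trans ih.1, hs.2.trans ih.2⟩

/-- the limit function and its inverse -/
noncomputable def YmD (m : ℕ) (a : M) : M :=
  (goD φ nth hdeep (NND nth hsurj m a - m) m) a

noncomputable def ZmD (m : ℕ) (a : M) : M :=
  (goD φ nth hdeep (NND nth hsurj m a - m) m)⁻¹ a

lemma YmD_eq {m : ℕ} {a : M} {k : ℕ} (hk : NND nth hsurj m a ≤ k) :
    (goD φ nth hdeep (k - m) m) a = YmD φ nth hdeep hsurj m a :=
  (limD φ nth hdeep hsurj m a k hk).1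

lemma ZmD_eq {m : ℕ} {a : M} {k : ℕ} (hk : NND nth hsurj m a ≤ k) :
    (goD φ nth hdeep (k - m) m)⁻¹ a = ZmD φ nth hdeep hsurj m a :=
  (limD φ nth hdeep hsurj m a k hk).2

lemma ZmD_YmD (m : ℕ) (a : M) :
    ZmD φ nth hdeep hsurj m (YmD φ nth hdeep hsurj m a) = a := by
  set b := YmD φ nth hdeep hsurj m a with hb
  set k := max (NND nth hsurj m a) (NND nth hsurj m b) with hkdef
  have h1 : (goD φ nth hdeep (k - m) m) a = b :=
    YmD_eq φ nth hdeep hsurj (le_max_left _ _)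
  have h2 : (goD φ nth hdeep (k - m) m)⁻¹ b = ZmD φ nth hdeep hsurj m b :=
    ZmD_eq φ nth hdeep hsurj (le_max_right _ _)
  rw [← h2, ← h1, inv_apply, Language.Equiv.symm_apply_apply]

lemma YmD_ZmD (m : ℕ) (a : M) :
    YmD φ nth hdeep hsurj m (ZmD φ nth hdeep hsurj m a) = a := by
  set b := ZmD φ nth hdeep hsurj m a with hb
  set k := max (NND nth hsurj m a) (NND nth hsurj m b) with hkdef
  have h1 : (goD φ nth hdeep (k - m) m)⁻¹ a = b :=
    ZmD_eq φ nth hdeep hsurj (le_max_left _ _)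
  have h2 : (goD φ nth hdeep (k - m) m) b = YmD φ nth hdeep hsurj m b :=
    YmD_eq φ nth hdeep hsurj (le_max_right _ _)
  rw [← h2, ← h1, inv_apply, Language.Equiv.apply_symm_apply]

/-- the limit automorphism -/
noncomputable def LautoD (m : ℕ) : M ≃[L] M where
  toFun := YmD φ nth hdeep hsurj m
  invFun := ZmD φ nth hdeep hsurj m
  left_inv := ZmD_YmD φ nth hdeep hsurj m
  right_inv := YmD_ZmD φ nth hdeep hsurj m
  map_fun' := by
    intro n F x
    set k := max (NND nth hsurj m (Language.Structure.funMap F x))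
      (Finset.univ.sup fun i => NND nth hsurj m (x i)) with hkdef
    have h1 : YmD φ nth hdeep hsurj m (Language.Structure.funMap F x)
        = (goD φ nth hdeep (k - m) m) (Language.Structure.funMap F x) :=
      (YmD_eq φ nth hdeep hsurj (le_max_left _ _)).symm
    have h2 : ∀ i, YmD φ nth hdeep hsurj m (x i) = (goD φ nth hdeep (k - m) m) (x i) := by
      intro i
      exact (YmD_eq φ nth hdeep hsurj
        (le_trans (Finset.le_sup (f := fun i => NND nth hsurj m (x i)) (Finset.mem_univ i)) (le_max_right _ _))).symm
    show YmD φ nth hdeep hsurj m (Language.Structure.funMap F x)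
        = Language.Structure.funMap F (YmD φ nth hdeep hsurj m ∘ x)
    rw [h1, Language.Equiv.map_fun]
    congr 1
    funext i
    simp only [Function.comp_apply]
    exact (h2 i).symm
  map_rel' := by
    intro n r x
    set k := Finset.univ.sup fun i => NND nth hsurj m (x i) with hkdef
    have h2 : (YmD φ nth hdeep hsurj m ∘ x) = (⇑(goD φ nth hdeep (k - m) m) ∘ x) := by
      funext i
      simp only [Function.comp_apply]
      exact (YmD_eq φ nth hdeep hsurj (Finset.le_sup (f := fun i => NND nth hsurj m (x i)) (Finset.mem_univ i))).symm
    show Language.Structure.RelMap r (YmD φ nth hdeep hsurj m ∘ x) ↔ Language.Structure.RelMap r x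
    rw [h2, Language.Equiv.map_rel]

lemma LautoD_apply (m : ℕ) (a : M) :
    (LautoD φ nth hdeep hsurj m) a = YmD φ nth hdeep hsurj m a := rfl

lemma LautoD_rel (m : ℕ) :
    LautoD φ nth hdeep hsurj m
      = uD φ nth hdeep m * (LautoD φ nth hdeep hsurj (m + 1)) ^ 3 := by
  apply Language.Equiv.ext
  intro a
  set a1 := YmD φ nth hdeep hsurj (m + 1) a with ha1
  set a2 := YmD φ nth hdeep hsurj (m + 1) a1 with ha2
  set k := max (max (NND nth hsurj m a) (NND nth hsurj (m + 1) a))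
    (max (NND nth hsurj (m + 1) a1) (NND nth hsurj (m + 1) a2)) with hkdef
  have hkm1 : m + 1 ≤ k := le_trans (NND_le nth hsurj (m + 1) a)
    (le_trans (le_max_right _ _) (le_max_left _ _))
  have hkm : k - m = (k - (m + 1)) + 1 := by omega
  -- LHS
  have hL : (LautoD φ nth hdeep hsurj m) a = (goD φ nth hdeep (k - m) m) a :=
    (YmD_eq φ nth hdeep hsurj (le_trans (le_max_left _ _) (le_max_left _ _))).symm
  -- RHS evaluation
  have hB1 : (goD φ nth hdeep (k - (m + 1)) (m + 1)) a = a1 :=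
    YmD_eq φ nth hdeep hsurj (le_trans (le_max_right _ _) (le_max_left _ _))
  have hB2 : (goD φ nth hdeep (k - (m + 1)) (m + 1)) a1 = a2 :=
    YmD_eq φ nth hdeep hsurj (le_trans (le_max_left _ _) (le_max_right _ _))
  have hB3 : (goD φ nth hdeep (k - (m + 1)) (m + 1)) a2
      = YmD φ nth hdeep hsurj (m + 1) a2 :=
    YmD_eq φ nth hdeep hsurj (le_trans (le_max_right _ _) (le_max_right _ _))
  have hgo : goD φ nth hdeep (k - m) m
      = uD φ nth hdeep m * (goD φ nth hdeep (k - (m + 1)) (m + 1)) ^ 3 := by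
    rw [hkm]; rfl
  rw [hL, hgo, mul_apply, mul_apply, pow3_apply, pow3_apply, hB1, hB2, hB3]
  rfl

end Dudley4

section Dudley5

variable {L : Language} {M : Type*} [L.Structure M]

open AutAux

/-- The Dudley-style automatic-continuity contradiction: there is no homomorphism to `ℤ`
with a supply of elements of value `-1` fixing arbitrary finite sets pointwise. -/
lemma dudleyD [Countable M] [Nonempty M] (φ : (M ≃[L] M) →* Multiplicative ℤ)
    (hdeep : ∀ F : List M, ∃ u : M ≃[L] M,
      (∀ a ∈ F, u a = a) ∧ φ u = Multiplicative.ofAdd (-1 : ℤ)) : False := by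
  obtain ⟨nth, hsurj⟩ := exists_surjective_nat M
  set t : ℕ → ℤ := fun m => (φ (LautoD φ nth hdeep hsurj m)).toAdd with ht
  have hval : ∀ m, φ (uD φ nth hdeep m) = Multiplicative.ofAdd (-1 : ℤ) := by
    intro m
    exact pickD_val φ nth hdeep (histD φ nth hdeep m)
  have hrec : ∀ m, t m = -1 + 3 * t (m + 1) := by
    intro m
    have h1 : φ (LautoD φ nth hdeep hsurj m)
        = φ (uD φ nth hdeep m) * (φ (LautoD φ nth hdeep hsurj (m + 1))) ^ 3 := by
      rw [LautoD_rel φ nth hdeep hsurj m, map_mul, map_pow]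
    have h2 := congrArg Multiplicative.toAdd h1
    rw [toAdd_mul, toAdd_pow, hval m] at h2
    simpa [ht] using h2
  have key : ∀ m, 2 * t 0 - 1 = 3 ^ m * (2 * t m - 1) := by
    intro m
    induction m with
    | zero => ring
    | succ m ih =>
      have hstep : 2 * t m - 1 = 3 * (2 * t (m + 1) - 1) := by
        have := hrec m; omega
      rw [ih, hstep, ← mul_assoc, ← pow_succ]
  have habs : ∀ m : ℕ, (3:ℤ) ^ m ≤ |2 * t 0 - 1| := by
    intro m
    have hne : 2 * t m - 1 ≠ 0 := by omega
    calc (3:ℤ) ^ m = 3 ^ m * 1 := by ring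
      _ ≤ 3 ^ m * |2 * t m - 1| := by
          have := Int.one_le_abs hne
          have h3 : (0:ℤ) ≤ 3 ^ m := by positivity
          nlinarith
      _ = |3 ^ m * (2 * t m - 1)| := by
          rw [abs_mul, abs_of_nonneg (by positivity : (0:ℤ) ≤ 3 ^ m)]
      _ = |2 * t 0 - 1| := by rw [← key m]
  -- contradiction: |2 t 0 - 1| is at least 3^m for all m
  set s : ℤ := 2 * t 0 - 1 with hs
  have h1 : (3:ℤ) ^ s.natAbs ≤ |s| := habs s.natAbs
  have h2 : (s.natAbs : ℤ) < (3:ℤ) ^ s.natAbs := by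
    have := Nat.lt_pow_self (n := s.natAbs) (by norm_num : 1 < 3)
    exact_mod_cast this
  rw [Int.abs_eq_natAbs] at h1
  omega

end Dudley5

/-- The automorphism group of a countable (countably infinite) first-order structure
is never an uncountable free group: if it is free, then it is countable. -/
theorem aut_of_countable_structure_free_implies_countable
    (L : Language) (M : Type*) [L.Structure M] [Countable M] [Infinite M]
    (hfree : IsFreeGroup (M ≃[L] M)) : Countable (M ≃[L] M) := by
  classical
  obtain ⟨ι, ⟨b⟩⟩ := hfree.nonempty_basis
  by_cases hι : Countable ι
  · haveI : Countable (FreeGroup ι) := FreeGroup.toWord_injective.countable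
    exact Countable.of_equiv _ b.repr.toEquiv.symm
  · exfalso
    -- a countable family of automorphisms realizing every realizable finite partial map
    set d : List (M × M) → (M ≃[L] M) := fun p =>
      if h : ∃ g : M ≃[L] M, ∀ q ∈ p, g q.1 = q.2 then h.choose else 1 with hddef
    have hd : ∀ (p : List (M × M)) (h : ∃ g : M ≃[L] M, ∀ q ∈ p, g q.1 = q.2),
        ∀ q ∈ p, (d p) q.1 = q.2 := by
      intro p h
      simp only [hddef, dif_pos h]
      exact h.choose_spec
    set letters : (M ≃[L] M) → List ι :=
      fun g => (FreeGroup.toWord (b.repr g)).map Prod.fst with hletters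
    set Y : Set ι := ⋃ p : List (M × M), {i | i ∈ letters (d p)} with hY
    have hYc : Y.Countable :=
      Set.countable_iUnion fun p => (List.finite_toSet _).countable
    obtain ⟨x₀, hx₀⟩ : ∃ x : ι, x ∉ Y := by
      by_contra h
      push_neg at h
      rw [Set.eq_univ_iff_forall.mpr h] at hYc
      exact hι (Set.countable_univ_iff.mp hYc)
    -- the exponent-sum homomorphism at the letter x₀
    set f : ι → Multiplicative ℤ :=
      fun i => if i = x₀ then Multiplicative.ofAdd (1 : ℤ) else 1 with hf
    set φ : (M ≃[L] M) →* Multiplicative ℤ :=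
      (FreeGroup.lift f).comp b.repr.toMonoidHom with hφ
    have hvanish : ∀ g : M ≃[L] M, x₀ ∉ letters g → φ g = 1 := by
      intro g hg
      show FreeGroup.lift f (b.repr g) = 1
      rw [← FreeGroup.mk_toWord (x := b.repr g), FreeGroup.lift_mk]
      apply List.prod_eq_one
      intro z hz
      simp only [List.mem_map] at hz
      obtain ⟨⟨i, bl⟩, hmem, rfl⟩ := hz
      have hix : i ≠ x₀ := by
        intro e
        exact hg (by
          rw [hletters]
          exact List.mem_map.2 ⟨(i, bl), hmem, e⟩)
      have hfi : f i = 1 := by rw [hf]; simp [hix]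
      cases bl <;> simp [hfi]
    set ξ : M ≃[L] M := b.repr.symm (FreeGroup.of x₀) with hξ
    have hξval : φ ξ = Multiplicative.ofAdd (1 : ℤ) := by
      show FreeGroup.lift f (b.repr (b.repr.symm (FreeGroup.of x₀))) = _
      rw [MulEquiv.apply_symm_apply, FreeGroup.lift_apply_of]
      rw [hf]; simp
    have hdeep : ∀ F : List M, ∃ u : M ≃[L] M,
        (∀ a ∈ F, u a = a) ∧ φ u = Multiplicative.ofAdd (-1 : ℤ) := by
      intro F
      set p : List (M × M) := F.map (fun a => (a, ξ a)) with hp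
      have hex : ∃ g : M ≃[L] M, ∀ q ∈ p, g q.1 = q.2 := by
        refine ⟨ξ, ?_⟩
        intro q hq
        rw [hp] at hq
        obtain ⟨a, _, rfl⟩ := List.mem_map.1 hq
        rfl
      refine ⟨ξ⁻¹ * d p, ?_, ?_⟩
      · intro a ha
        have hda : (d p) a = ξ a := hd p hex (a, ξ a) (by
          rw [hp]; exact List.mem_map_of_mem ha)
        rw [AutAux.mul_apply, hda, AutAux.inv_apply, Language.Equiv.symm_apply_apply]
      · have hdval : φ (d p) = 1 :=
          hvanish _ (fun hmem => hx₀ (by rw [hY]; exact Set.mem_iUnion.2 ⟨p, hmem⟩))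
        rw [map_mul, map_inv, hξval, hdval, mul_one, ← ofAdd_neg]
    exact dudleyD φ hdeep
end

section
/- Let (G,d) be a complete metric group with identity e, and let B ⊆ G be a countable set such that e lies in the closure of B ∖ {e}. Let Ξ be a set of group words w(x, y₁,…,y_k) (elements of free groups in the variables shown, evaluated in G by substitution). Assume: (d) for every word w(x,ȳ) ∈ Ξ, every tuple b̄ of elements of B, and every c ∈ G, the set {a ∈ G : w(a, b̄) = c} is finite; and (e) for every finite A ⊆ G and every real ζ > 0 there are a word w(x,ȳ) ∈ Ξ and a tuple b̄ of elements of B such that d(w(e, b̄), e) < ζ and w(c, b̄) ∉ A for every c ∈ G. Then no countable subgroup of G containing B is a retract of G; consequently G is not a free group. -/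
/-- Evaluation of a group word `w(x, y₁, …, y_k)` (an element of the free group on
`Fin (k+1)`, with variable `0` distinguished as `x`) in a group `G`, at `x := a` and
`ȳ := b`. -/
def evalWord {G : Type*} [Group G] {k : ℕ} (w : FreeGroup (Fin (k + 1)))
    (a : G) (b : Fin k → G) : G :=
  FreeGroup.lift (Fin.cons a b) w

section Aux

variable {G : Type*} [Group G]

lemma continuous_evalWord [TopologicalSpace G] [IsTopologicalGroup G]
    {k : ℕ} (w : FreeGroup (Fin (k + 1))) (b : Fin k → G) :
    Continuous fun a : G => evalWord w a b := by
  unfold evalWord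
  induction w using FreeGroup.induction_on with
  | C1 => simpa using continuous_const
  | of x =>
    show Continuous fun a : G => FreeGroup.lift (Fin.cons a b) (FreeGroup.of x)
    simp only [FreeGroup.lift_apply_of]
    induction x using Fin.cases with
    | zero => simpa using continuous_id'
    | succ i => simpa using continuous_const
  | inv_of x hx => simp only [map_inv]; exact hx.inv
  | mul x y hx hy => simp only [map_mul]; exact hx.mul hy

lemma evalWord_comm {k : ℕ} (w : FreeGroup (Fin (k + 1))) (h : G →* G)
    (a : G) (b : Fin k → G) (hb : ∀ i, h (b i) = b i) :
    h (evalWord w a b) = evalWord w (h a) b := by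
  have key : h.comp (FreeGroup.lift (Fin.cons a b)) = FreeGroup.lift (Fin.cons (h a) b) := by
    apply FreeGroup.ext_hom
    intro i
    simp only [MonoidHom.comp_apply, FreeGroup.lift_apply_of]
    induction i using Fin.cases with
    | zero => simp
    | succ i => simp [hb]
  exact DFunLike.congr_fun key w

/-- A "datum": a group word together with parameters. -/
def GDatum (G : Type*) [Group G] : Type _ :=
  Σ k : ℕ, FreeGroup (Fin (k + 1)) × (Fin k → G)

/-- Evaluate a datum at a group element. -/
def GDatum.eval (d : GDatum G) (g : G) : G := evalWord d.2.1 g d.2.2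

instance : Inhabited (GDatum G) := ⟨⟨0, 1, Fin.elim0⟩⟩

/-- Iterated evaluation: apply the data at indices `m, m+1, …, m+j-1`, innermost first. -/
def iterEval (f : ℕ → GDatum G) : ℕ → ℕ → G → G
  | _, 0, g => g
  | m, j + 1, g => (f m).eval (iterEval f (m + 1) j g)

lemma iterEval_succ' (f : ℕ → GDatum G) (m j : ℕ) (g : G) :
    iterEval f m (j + 1) g = iterEval f m j ((f (m + j)).eval g) := by
  induction j generalizing m g with
  | zero => simp [iterEval]
  | succ j ih =>
    show (f m).eval (iterEval f (m + 1) (j + 1) g) = _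
    rw [ih]
    have : m + 1 + j = m + (j + 1) := by omega
    rw [this]
    rfl

lemma iterEval_congr {f f' : ℕ → GDatum G} (m j : ℕ)
    (h : ∀ i, m ≤ i → i < m + j → f i = f' i) (g : G) :
    iterEval f m j g = iterEval f' m j g := by
  induction j generalizing m g with
  | zero => rfl
  | succ j ih =>
    show (f m).eval (iterEval f (m + 1) j g) = (f' m).eval (iterEval f' (m + 1) j g)
    rw [h m le_rfl (by omega), ih (m + 1) (fun i h1 h2 => h i (by omega) (by omega)) g]

lemma continuous_iterEval [TopologicalSpace G] [IsTopologicalGroup G]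
    (f : ℕ → GDatum G) (m j : ℕ) : Continuous (iterEval f m j) := by
  induction j generalizing m with
  | zero => exact continuous_id
  | succ j ih =>
    show Continuous fun g => evalWord (f m).2.1 (iterEval f (m + 1) j g) (f m).2.2
    exact (continuous_evalWord _ _).comp (ih (m + 1))

lemma iterEval_preimage_finite (f : ℕ → GDatum G) (m j : ℕ)
    (hfib : ∀ i, m ≤ i → i < m + j → ∀ c : G, {g : G | (f i).eval g = c}.Finite)
    {A : Set G} (hA : A.Finite) : (iterEval f m j ⁻¹' A).Finite := by
  induction j generalizing m A with
  | zero => exact hA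
  | succ j ih =>
    have h1 : ((f m).eval ⁻¹' A).Finite := by
      have heq : (f m).eval ⁻¹' A = ⋃ c ∈ A, {g : G | (f m).eval g = c} := by
        ext g; simp [Set.mem_preimage, eq_comm]
      rw [heq]
      exact hA.biUnion fun c _ => hfib m le_rfl (by omega) c
    exact ih (m + 1) (fun i hi1 hi2 => hfib i (by omega) (by omega)) h1

lemma iterEval_comm (f : ℕ → GDatum G) (h : G →* G)
    (hb : ∀ i idx, h ((f i).2.2 idx) = (f i).2.2 idx) (m j : ℕ) (g : G) :
    h (iterEval f m j g) = iterEval f m j (h g) := by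
  induction j generalizing m g with
  | zero => rfl
  | succ j ih =>
    show h ((f m).eval (iterEval f (m + 1) j g)) = (f m).eval (iterEval f (m + 1) j (h g))
    rw [show (f m).eval (iterEval f (m+1) j g) = evalWord (f m).2.1 (iterEval f (m+1) j g) (f m).2.2 from rfl,
      evalWord_comm _ h _ _ (hb m), ih (m + 1) g]
    rfl

variable [MetricSpace G]

/-- The invariant satisfied by the recursively-constructed sequence of data. -/
def GoodSeq (B : Set G) (Ξ : Set (Σ k : ℕ, FreeGroup (Fin (k + 1)))) (c : ℕ → G)
    (f : ℕ → GDatum G) (n : ℕ) : Prop :=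
  (⟨(f n).1, (f n).2.1⟩ : Σ k : ℕ, FreeGroup (Fin (k + 1))) ∈ Ξ ∧
  (∀ i, (f n).2.2 i ∈ B) ∧
  (∀ g : G, ∀ j ≤ n, iterEval f 0 (n + 1) g ≠ c j) ∧
  (∀ m ≤ n, dist (iterEval f m (n + 1 - m) (1 : G)) (iterEval f m (n - m) (1 : G))
    < (1 / 2 : ℝ) ^ n)

lemma goodSeq_congr {B : Set G} {Ξ : Set (Σ k : ℕ, FreeGroup (Fin (k + 1)))} {c : ℕ → G}
    {f f' : ℕ → GDatum G} {n : ℕ} (h : ∀ i, i ≤ n → f i = f' i)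
    (hf : GoodSeq B Ξ c f n) : GoodSeq B Ξ c f' n := by
  obtain ⟨h1, h2, h3, h4⟩ := hf
  refine ⟨?_, ?_, ?_, ?_⟩
  · rw [← h n le_rfl]; exact h1
  · rw [← h n le_rfl]; exact h2
  · intro g j hj
    rw [← iterEval_congr (f := f) (f' := f') 0 (n + 1) (fun i hi1 hi2 => h i (by omega)) g]
    exact h3 g j hj
  · intro m hm
    rw [← iterEval_congr (f := f) (f' := f') m (n + 1 - m) (fun i hi1 hi2 => h i (by omega)) 1,
      ← iterEval_congr (f := f) (f' := f') m (n - m) (fun i hi1 hi2 => h i (by omega)) 1]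
    exact h4 m hm

end Aux

section Main

variable {G : Type*} [Group G] [MetricSpace G] [IsTopologicalGroup G]

lemma exists_goodSeq_step (B : Set G) (Ξ : Set (Σ k : ℕ, FreeGroup (Fin (k + 1))))
    (hd : ∀ w ∈ Ξ, ∀ b : Fin w.1 → G, (∀ i, b i ∈ B) → ∀ c : G,
      {a : G | evalWord w.2 a b = c}.Finite)
    (he : ∀ A : Set G, A.Finite → ∀ ζ : ℝ, 0 < ζ →
      ∃ w ∈ Ξ, ∃ b : Fin w.1 → G, (∀ i, b i ∈ B) ∧
        dist (evalWord w.2 1 b) (1 : G) < ζ ∧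
        ∀ c : G, evalWord w.2 c b ∉ A)
    (c : ℕ → G) (n : ℕ) (f : ℕ → GDatum G)
    (hprev : ∀ m, m < n → GoodSeq B Ξ c f m) :
    ∃ d : GDatum G, GoodSeq B Ξ c (fun i => if i < n then f i else d) n := by
  -- continuity moduli
  have hcont : ∀ m : ℕ, ∃ δ > (0 : ℝ), ∀ g : G, dist g 1 < δ →
      dist (iterEval f m (n - m) g) (iterEval f m (n - m) 1) < (1 / 2 : ℝ) ^ n := by
    intro m
    have h := (continuous_iterEval f m (n - m)).continuousAt (x := (1 : G))
    rw [Metric.continuousAt_iff] at h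
    obtain ⟨δ, hδpos, hh⟩ := h ((1 / 2 : ℝ) ^ n) (by positivity)
    exact ⟨δ, hδpos, fun g hg => hh hg⟩
  choose δ hδpos hδ using hcont
  have hne : (Finset.Iic n).Nonempty := ⟨n, Finset.mem_Iic.2 le_rfl⟩
  set ζ : ℝ := (Finset.Iic n).inf' hne δ with hζ
  have hζpos : 0 < ζ := by
    rw [hζ, Finset.lt_inf'_iff]
    exact fun m _ => hδpos m
  have hζle : ∀ m, m ≤ n → ζ ≤ δ m := fun m hm =>
    Finset.inf'_le δ (Finset.mem_Iic.2 hm)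
  -- the finite forbidden set
  have hAfin : ((iterEval f 0 n) ⁻¹' (c '' Set.Iic n)).Finite := by
    apply iterEval_preimage_finite
    · intro i h0 hi cc
      obtain ⟨hΞ, hB, -, -⟩ := hprev i (by omega)
      exact hd _ hΞ _ hB cc
    · exact (Set.finite_Iic n).image c
  obtain ⟨w, hwΞ, b, hbB, hdist, havoid⟩ := he _ hAfin ζ hζpos
  have hfn : (if n < n then f n else (⟨w.1, w.2, b⟩ : GDatum G)) = ⟨w.1, w.2, b⟩ :=
    if_neg (lt_irrefl n)
  refine ⟨⟨w.1, w.2, b⟩, ?_, ?_, ?_, ?_⟩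
  · show (⟨(if n < n then f n else (⟨w.1, w.2, b⟩ : GDatum G)).1,
      (if n < n then f n else (⟨w.1, w.2, b⟩ : GDatum G)).2.1⟩ :
      Σ k : ℕ, FreeGroup (Fin (k + 1))) ∈ Ξ
    rw [hfn]
    exact hwΞ
  · show ∀ i : Fin (if n < n then f n else (⟨w.1, w.2, b⟩ : GDatum G)).1,
      (if n < n then f n else (⟨w.1, w.2, b⟩ : GDatum G)).2.2 i ∈ B
    rw [hfn]
    exact hbB
  · intro g j hj
    set f' : ℕ → GDatum G := fun i => if i < n then f i else ⟨w.1, w.2, b⟩ with hf'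
    have e1 : iterEval f' 0 (n + 1) g
        = iterEval f 0 n (GDatum.eval (⟨w.1, w.2, b⟩ : GDatum G) g) := by
      rw [iterEval_succ' f' 0 n g]
      have hfn : f' n = ⟨w.1, w.2, b⟩ := by simp [hf']; rfl
      rw [show (0 : ℕ) + n = n from by omega, hfn]
      exact iterEval_congr 0 n (fun i hi1 hi2 => by simp [hf', show i < n from by omega]) _
    rw [e1]
    intro hcontra
    exact havoid g ⟨j, hj, hcontra.symm⟩
  · intro m hm
    set f' : ℕ → GDatum G := fun i => if i < n then f i else ⟨w.1, w.2, b⟩ with hf'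
    have hc : ∀ g : G, iterEval f' m (n - m) g = iterEval f m (n - m) g := fun g =>
      (iterEval_congr m (n - m) (fun i hi1 hi2 => by simp [hf', show i < n from by omega]) g).symm
    have hnm : n + 1 - m = (n - m) + 1 := by omega
    rw [hnm, iterEval_succ' f' m (n - m) 1, show m + (n - m) = n from by omega,
      show f' n = (⟨w.1, w.2, b⟩ : GDatum G) from by simp [hf']; rfl, hc, hc]
    exact hδ m _ (lt_of_lt_of_le hdist (hζle m hm))
    
lemma exists_goodSeq (B : Set G) (Ξ : Set (Σ k : ℕ, FreeGroup (Fin (k + 1))))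
    (hd : ∀ w ∈ Ξ, ∀ b : Fin w.1 → G, (∀ i, b i ∈ B) → ∀ c : G,
      {a : G | evalWord w.2 a b = c}.Finite)
    (he : ∀ A : Set G, A.Finite → ∀ ζ : ℝ, 0 < ζ →
      ∃ w ∈ Ξ, ∃ b : Fin w.1 → G, (∀ i, b i ∈ B) ∧
        dist (evalWord w.2 1 b) (1 : G) < ζ ∧
        ∀ c : G, evalWord w.2 c b ∉ A)
    (c : ℕ → G) :
    ∃ F : ℕ → GDatum G, ∀ n, GoodSeq B Ξ c F n := by
  classical
  have key : ∀ (n : ℕ) (u : ℕ → GDatum G), (∀ m, m < n → GoodSeq B Ξ c u m) →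
      ∃ u' : ℕ → GDatum G, (∀ i, i < n → u' i = u i) ∧
        ∀ m, m < n + 1 → GoodSeq B Ξ c u' m := by
    intro n u hu
    obtain ⟨d, hd'⟩ := exists_goodSeq_step B Ξ hd he c n u hu
    refine ⟨fun i => if i < n then u i else d, fun i hi => if_pos hi, ?_⟩
    intro m hm
    rcases Nat.lt_succ_iff_lt_or_eq.mp hm with h | h
    · exact goodSeq_congr (fun i hi => (if_pos (lt_of_le_of_lt hi h)).symm) (hu m h)
    · subst h; exact hd'
  choose! next hnext1 hnext2 using key
  let S : ℕ → (ℕ → GDatum G) := fun n =>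
    Nat.rec (fun _ => default) (fun n ih => next n ih) n
  have hS : ∀ n, ∀ m, m < n → GoodSeq B Ξ c (S n) m := by
    intro n
    induction n with
    | zero => exact fun m hm => absurd hm (Nat.not_lt_zero m)
    | succ n ih => exact hnext2 n (S n) ih
  have hcompat : ∀ n i, i < n → S (n + 1) i = S n i := fun n i hi =>
    hnext1 n (S n) (hS n) i hi
  have hchain : ∀ N n i, i < n → n ≤ N → S N i = S n i := by
    intro N
    induction N with
    | zero =>
      intro n i hi hn
      have : n = 0 := by omega
      subst this; rfl
    | succ N ih =>
      intro n i hi hn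
      rcases Nat.eq_or_lt_of_le hn with h | h
      · subst h; rfl
      · have h1 : S (N + 1) i = S N i := hcompat N i (by omega)
        rw [h1, ih n i hi (by omega)]
  refine ⟨fun i => S (i + 1) i, fun n => ?_⟩
  refine goodSeq_congr (f := S (n + 1)) (fun i hi => ?_) (hS (n + 1) n (by omega))
  exact hchain (n + 1) (i + 1) i (by omega) (by omega)

lemma no_countable_retract [CompleteSpace G]
    (B : Set G) (Ξ : Set (Σ k : ℕ, FreeGroup (Fin (k + 1))))
    (hd : ∀ w ∈ Ξ, ∀ b : Fin w.1 → G, (∀ i, b i ∈ B) → ∀ c : G,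
      {a : G | evalWord w.2 a b = c}.Finite)
    (he : ∀ A : Set G, A.Finite → ∀ ζ : ℝ, 0 < ζ →
      ∃ w ∈ Ξ, ∃ b : Fin w.1 → G, (∀ i, b i ∈ B) ∧
        dist (evalWord w.2 1 b) (1 : G) < ζ ∧
        ∀ c : G, evalWord w.2 c b ∉ A)
    (H : Subgroup G) (hHc : Countable H) (hBH : B ⊆ (H : Set G)) :
    ¬ ∃ h : G →* G, (∀ x : G, h x ∈ H) ∧ (∀ x ∈ H, h x = x) := by
  rintro ⟨h, hmem, hfix⟩
  have hHset : (H : Set G).Countable := by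
    have : Countable ((H : Set G) : Type _) := hHc
    exact Set.to_countable _
  obtain ⟨c, hc⟩ := hHset.exists_eq_range ⟨1, H.one_mem⟩
  obtain ⟨F, hF⟩ := exists_goodSeq B Ξ hd he c
  -- the tail limits
  have hcauchy : ∀ m : ℕ, CauchySeq (fun j => iterEval F m j (1 : G)) := by
    intro m
    apply cauchySeq_of_le_geometric (1 / 2 : ℝ) 1 (by norm_num)
    intro j
    have h4 := (hF (m + j)).2.2.2 m (by omega)
    rw [show m + j + 1 - m = j + 1 from by omega, show m + j - m = j from by omega] at h4
    have : dist (iterEval F m j (1 : G)) (iterEval F m (j + 1) 1) < (1 / 2 : ℝ) ^ (m + j) := by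
      rwa [dist_comm]
    refine le_trans this.le ?_
    rw [one_mul]
    exact pow_le_pow_of_le_one (by norm_num) (by norm_num) (by omega)
  have hlim : ∀ m : ℕ, ∃ t : G, Filter.Tendsto (fun j => iterEval F m j (1 : G))
      Filter.atTop (nhds t) := fun m => cauchySeq_tendsto_of_complete (hcauchy m)
  choose t ht using hlim
  have hteq : ∀ m, t m = (F m).eval (t (m + 1)) := by
    intro m
    have h1 : Filter.Tendsto (fun j => iterEval F m (j + 1) (1 : G))
        Filter.atTop (nhds (t m)) := (ht m).comp (Filter.tendsto_add_atTop_nat 1)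
    have h2 : Filter.Tendsto (fun j => (F m).eval (iterEval F (m + 1) j (1 : G)))
        Filter.atTop (nhds ((F m).eval (t (m + 1)))) := by
      have hco : Continuous (F m).eval := by
        show Continuous fun g => evalWord (F m).2.1 g (F m).2.2
        exact continuous_evalWord _ _
      exact (hco.tendsto _).comp (ht (m + 1))
    exact tendsto_nhds_unique h1 h2
  -- the limit point and its descriptions
  have ha : ∀ n, t 0 = iterEval F 0 n (t n) := by
    intro n
    induction n with
    | zero => rfl
    | succ n ih =>
      rw [iterEval_succ' F 0 n (t (n + 1)), show (0 : ℕ) + n = n from by omega, ← hteq n]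
      exact ih
  -- h fixes the parameters
  have hbfix : ∀ i idx, h ((F i).2.2 idx) = (F i).2.2 idx := fun i idx =>
    hfix _ (hBH ((hF i).2.1 idx))
  -- h (t 0) is in H, so it is some c j
  have hmem' : h (t 0) ∈ (H : Set G) := hmem (t 0)
  rw [hc] at hmem'
  obtain ⟨j, hj⟩ := hmem'
  -- contradiction with avoidance at stage j
  have havoid := (hF j).2.2.1 (h (t (j + 1))) j le_rfl
  apply havoid
  rw [← iterEval_comm F h hbfix 0 (j + 1) (t (j + 1)), ← ha (j + 1), hj]

end Main

section Free

variable {G : Type*} [Group G]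

lemma countable_subgroup_closure {s : Set G} (hs : s.Countable) :
    Countable (Subgroup.closure s) := by
  have hsi : (s ∪ s⁻¹).Countable := by
    refine hs.union ?_
    rw [← Set.image_inv_eq_inv]
    exact hs.image _
  haveI : Countable ↥(s ∪ s⁻¹) := hsi.to_subtype
  have hsub : (Subgroup.closure s : Set G) ⊆
      Set.range (fun l : List ↥(s ∪ s⁻¹) => (l.map Subtype.val).prod) := by
    intro x hx
    have hx' : x ∈ Submonoid.closure (s ∪ s⁻¹) := by
      rw [← Subgroup.closure_toSubmonoid]; exact hx
    obtain ⟨l, hl, hprod⟩ := Submonoid.exists_list_of_mem_closure hx'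
    have hlist : ∀ l : List G, (∀ y ∈ l, y ∈ s ∪ s⁻¹) →
        ∃ l' : List ↥(s ∪ s⁻¹), l'.map Subtype.val = l := by
      intro l
      induction l with
      | nil => exact fun _ => ⟨[], rfl⟩
      | cons a l ih =>
        intro hmem
        obtain ⟨l', hl'⟩ := ih fun y hy => hmem y (List.mem_cons_of_mem a hy)
        refine ⟨⟨a, hmem a (List.mem_cons_self (a := a) (l := l))⟩ :: l', ?_⟩
        simp only [List.map_cons, hl']
    obtain ⟨l', hl'⟩ := hlist l hl
    refine ⟨l', ?_⟩
    show (l'.map Subtype.val).prod = x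
    rw [hl', hprod]
  have : (Subgroup.closure s : Set G).Countable :=
    (Set.countable_range _).mono hsub
  exact this.to_subtype

lemma mem_closure_finite_subset {s : Set G} {x : G} (hx : x ∈ Subgroup.closure s) :
    ∃ t : Set G, t ⊆ s ∧ t.Finite ∧ x ∈ Subgroup.closure t := by
  have hx' : x ∈ Submonoid.closure (s ∪ s⁻¹) := by
    rw [← Subgroup.closure_toSubmonoid]; exact hx
  obtain ⟨l, hl, hprod⟩ := Submonoid.exists_list_of_mem_closure hx'
  refine ⟨{y | y ∈ s ∧ (y ∈ l ∨ y⁻¹ ∈ l)}, fun y hy => hy.1, ?_, ?_⟩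
  · apply Set.Finite.subset ((l.finite_toSet).union ((l.finite_toSet).image Inv.inv))
    rintro y ⟨-, hy | hy⟩
    · exact Or.inl hy
    · exact Or.inr ⟨y⁻¹, hy, inv_inv y⟩
  · rw [← hprod]
    apply Subgroup.list_prod_mem
    intro y hy
    rcases hl y hy with h | h
    · exact Subgroup.subset_closure ⟨h, Or.inl hy⟩
    · have h1 : y⁻¹ ∈ s := by rwa [Set.mem_inv] at h
      have : y⁻¹ ∈ Subgroup.closure {y | y ∈ s ∧ (y ∈ l ∨ y⁻¹ ∈ l)} :=
        Subgroup.subset_closure ⟨h1, Or.inr (by simpa using hy)⟩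
      simpa using (Subgroup.closure _).inv_mem this
end Free

/-- A criterion for non-freeness of a complete metric group `G`: given a countable set
`B ⊆ G` with the identity in the closure of `B ∖ {1}` and a set `Ξ` of group words
`w(x, ȳ)` such that (d) every equation `w(x, b̄) = c` with `b̄` from `B` has finitely many
solutions, and (e) for every finite `A ⊆ G` and `ζ > 0` there are `w ∈ Ξ` and `b̄` from
`B` with `dist (w(1, b̄), 1) < ζ` and `w(c, b̄) ∉ A` for all `c`; then no countable
subgroup of `G` containing `B` is a retract of `G`, and consequently `G` is not free. -/
theorem complete_metric_group_not_free_criterion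
    (G : Type*) [Group G] [MetricSpace G] [CompleteSpace G] [IsTopologicalGroup G]
    (B : Set G) (hBcount : B.Countable) (hBcl : (1 : G) ∈ closure (B \ {1}))
    (Ξ : Set (Σ k : ℕ, FreeGroup (Fin (k + 1))))
    (hd : ∀ w ∈ Ξ, ∀ b : Fin w.1 → G, (∀ i, b i ∈ B) → ∀ c : G,
      {a : G | evalWord w.2 a b = c}.Finite)
    (he : ∀ A : Set G, A.Finite → ∀ ζ : ℝ, 0 < ζ →
      ∃ w ∈ Ξ, ∃ b : Fin w.1 → G, (∀ i, b i ∈ B) ∧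
        dist (evalWord w.2 1 b) (1 : G) < ζ ∧
        ∀ c : G, evalWord w.2 c b ∉ A) :
    (∀ H : Subgroup G, Countable H → B ⊆ (H : Set G) →
      ¬ ∃ h : G →* G, (∀ x : G, h x ∈ H) ∧ (∀ x ∈ H, h x = x)) ∧
    ¬ IsFreeGroup G := by
  classical
  have main : ∀ H : Subgroup G, Countable H → B ⊆ (H : Set G) →
      ¬ ∃ h : G →* G, (∀ x : G, h x ∈ H) ∧ (∀ x ∈ H, h x = x) :=
    fun H hHc hBH => no_countable_retract B Ξ hd he H hHc hBH
  refine ⟨main, ?_⟩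
  intro hfree
  set X := IsFreeGroup.Generators G with hX
  set e : G ≃* FreeGroup X := IsFreeGroup.toFreeGroup G with he'
  -- choose finite supports
  have hmemtop : ∀ g : G, e g ∈ Subgroup.closure (Set.range (FreeGroup.of (α := X))) := by
    intro g
    rw [FreeGroup.closure_range_of]
    trivial
  have hfin : ∀ g : B, ∃ t : Set (FreeGroup X), t ⊆ Set.range (FreeGroup.of (α := X)) ∧
      t.Finite ∧ e g ∈ Subgroup.closure t :=
    fun g => mem_closure_finite_subset (hmemtop g)
  choose tt htt1 htt2 htt3 using hfin
  haveI : Countable B := hBcount.to_subtype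
  set Y : Set (FreeGroup X) := ⋃ g : B, tt g with hY
  have hYc : Y.Countable := Set.countable_iUnion fun g => (htt2 g).countable
  have hYsub : Y ⊆ Set.range (FreeGroup.of (α := X)) :=
    Set.iUnion_subset fun g => htt1 g
  set H₀ : Subgroup (FreeGroup X) := Subgroup.closure Y with hH₀
  haveI hH₀c : Countable H₀ := countable_subgroup_closure hYc
  set r : FreeGroup X →* FreeGroup X :=
    FreeGroup.lift (fun x : X => if FreeGroup.of x ∈ Y then FreeGroup.of x else 1) with hr
  have hr_range : ∀ z, r z ∈ H₀ := by
    intro z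
    apply FreeGroup.range_lift_le (s := H₀) ?_ ⟨z, rfl⟩
    rintro y ⟨x, rfl⟩
    show (if FreeGroup.of x ∈ Y then FreeGroup.of x else 1) ∈ H₀
    by_cases hcase : FreeGroup.of x ∈ Y
    · rw [if_pos hcase]; exact Subgroup.subset_closure hcase
    · rw [if_neg hcase]; exact H₀.one_mem
  have hr_fix : ∀ z ∈ H₀, r z = z := by
    intro z hz
    induction hz using Subgroup.closure_induction with
    | mem y hy =>
      obtain ⟨x, rfl⟩ := hYsub hy
      rw [hr]
      simp [hy]
    | one => exact map_one r
    | mul x y hx hy ihx ihy => rw [map_mul, ihx, ihy]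
    | inv x hx ihx => rw [map_inv, ihx]
  set H : Subgroup G := H₀.comap e.toMonoidHom with hHdef
  haveI hHcount : Countable H := by
    have hinj : Function.Injective (fun x : H => (⟨e x.1, x.2⟩ : H₀)) := by
      intro x y hxy
      have : e x.1 = e y.1 := congrArg Subtype.val hxy
      exact Subtype.ext (e.injective this)
    exact hinj.countable
  have hBH : B ⊆ (H : Set G) := by
    intro g hg
    have : e g ∈ Subgroup.closure (tt ⟨g, hg⟩) := htt3 ⟨g, hg⟩
    have hle : Subgroup.closure (tt ⟨g, hg⟩) ≤ H₀ :=
      Subgroup.closure_mono (Set.subset_iUnion (fun g : B => tt g) ⟨g, hg⟩)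
    exact hle this
  refine main H hHcount hBH ⟨(e.symm.toMonoidHom.comp (r.comp e.toMonoidHom)), ?_, ?_⟩
  · intro x
    show e.symm (r (e x)) ∈ H
    rw [hHdef, Subgroup.mem_comap]
    show e (e.symm (r (e x))) ∈ H₀
    rw [MulEquiv.apply_symm_apply]
    exact hr_range _
  · intro x hx
    have hx' : e x ∈ H₀ := hx
    show e.symm (r (e x)) = x
    rw [hr_fix _ hx', MulEquiv.symm_apply_apply]
end
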